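/- arXiv:2001.04400 — 6 statements merged into one kernel-verified Lean document; each statement's English description precedes it below -/
import Mathlib

section
/- For the statistical model of sequential measurements, the modified Shannon entropy satisfies H(p) ≤ -Σ_{j∈J} q(j)·log(p̃(j)/d̃(j)). -/
open Finset Real

/-- For the statistical model of sequential measurements, the modified Shannon entropy
`H(p) = -Σ_i p(i) log(p(i)/d(i))` (with `p(i) = d(i)·x(i)`) satisfies
`H(p) ≤ -Σ_j q(j)·log(p̃(j)/d̃(j))`, where `q(j) = Σ_i Π(j|i)·x(i)` and
`p̃(j) = d̃(j)·x̃(j)`. -/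
theorem modified_entropy_bound {I J : Type*} [Fintype I] [Fintype J]
    (K : J → I → ℝ) (x : I → ℝ) (xt : J → ℝ)
    (hK : ∀ j i, 0 ≤ K j i) (hx : ∀ i, 0 ≤ x i) (hxt : ∀ j, 0 < xt j)
    (hd : ∀ i, 0 < ∑ j, K j i) (hdt : ∀ j, 0 < ∑ i, K j i)
    (hP : ∑ i, ∑ j, K j i * x i = 1)
    (hPt : ∑ i, ∑ j, K j i * xt j = 1) :
    -∑ i, ((∑ j, K j i) * x i) * Real.log (((∑ j, K j i) * x i) / (∑ j, K j i)) ≤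
      -∑ j, (∑ i, K j i * x i) *
        Real.log (((∑ i, K j i) * xt j) / (∑ i, K j i)) := by
  have hlog1 : ∀ i, ((∑ j, K j i) * x i) / (∑ j, K j i) = x i := fun i =>
    mul_div_cancel_left₀ _ (hd i).ne'
  have hlog2 : ∀ j, ((∑ i, K j i) * xt j) / (∑ i, K j i) = xt j := fun j =>
    mul_div_cancel_left₀ _ (hdt j).ne'
  simp only [hlog1, hlog2]
  rw [neg_le_neg_iff]
  -- goal: Σ_j q j * log (xt j) ≤ Σ_i d i * x i * log (x i)
  have L : ∑ j, (∑ i, K j i * x i) * Real.log (xt j)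
      = ∑ i, ∑ j, K j i * x i * Real.log (xt j) := by
    rw [Finset.sum_comm]
    simp [Finset.sum_mul]
  have R : ∑ i, ((∑ j, K j i) * x i) * Real.log (x i)
      = ∑ i, ∑ j, K j i * x i * Real.log (x i) := by
    refine Finset.sum_congr rfl fun i _ => ?_
    rw [Finset.sum_mul, Finset.sum_mul]
  rw [L, R]
  have main : (∑ i, ∑ j, K j i * x i * Real.log (xt j))
      - (∑ i, ∑ j, K j i * x i * Real.log (x i)) ≤ 0 := by
    rw [← Finset.sum_sub_distrib]
    simp only [← Finset.sum_sub_distrib]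
    have key : ∀ i j, K j i * x i * Real.log (xt j) - K j i * x i * Real.log (x i)
        ≤ K j i * xt j - K j i * x i := by
      intro i j
      rcases eq_or_lt_of_le (hx i) with h0 | hpos
      · have h3 := mul_nonneg (hK j i) (hxt j).le
        simp only [← h0, mul_zero, zero_mul, Real.log_zero, sub_zero, zero_sub, neg_zero]
        linarith
      · have h1 : Real.log (xt j / x i) ≤ xt j / x i - 1 :=
          Real.log_le_sub_one_of_pos (div_pos (hxt j) hpos)
        rw [Real.log_div (hxt j).ne' hpos.ne'] at h1
        have h2 := mul_le_mul_of_nonneg_left h1 (mul_nonneg (hK j i) (hx i))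
        calc K j i * x i * Real.log (xt j) - K j i * x i * Real.log (x i)
            = K j i * x i * (Real.log (xt j) - Real.log (x i)) := by ring
          _ ≤ K j i * x i * (xt j / x i - 1) := h2
          _ = K j i * xt j - K j i * x i := by field_simp
    calc ∑ i, ∑ j, (K j i * x i * Real.log (xt j) - K j i * x i * Real.log (x i))
        ≤ ∑ i, ∑ j, (K j i * xt j - K j i * x i) := by
          refine Finset.sum_le_sum fun i _ => Finset.sum_le_sum fun j _ => key i j
      _ = 0 := by
          simp only [Finset.sum_sub_distrib]
          rw [hPt, hP]; ring
  linarith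
end

section
/- In the minimal case, where x̃(j) = q(j)/d̃(j) for all j, the modified Shannon entropy does not decrease: H(p) ≤ H(q). -/
open Finset Real

lemma log_sum_key {I : Type*} [Fintype I] (b x : I → ℝ)
    (hb : ∀ i, 0 ≤ b i) (hx : ∀ i, 0 ≤ x i) (hs : 0 < ∑ i, b i) :
    (∑ i, b i * x i) * Real.log ((∑ i, b i * x i) / (∑ i, b i)) ≤
      ∑ i, b i * x i * Real.log (x i) := by
  set s := ∑ i, b i with hsdef
  set A := ∑ i, b i * x i with hAdef
  have hA0 : 0 ≤ A := Finset.sum_nonneg fun i _ => mul_nonneg (hb i) (hx i)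
  rcases eq_or_lt_of_le hA0 with hA | hA
  · have hz : ∀ i ∈ Finset.univ, b i * x i = 0 := by
      intro i hi
      have := (Finset.sum_eq_zero_iff_of_nonneg
        (fun i _ => mul_nonneg (hb i) (hx i))).mp hA.symm
      exact this i hi
    have : ∑ i, b i * x i * Real.log (x i) = 0 :=
      Finset.sum_eq_zero fun i hi => by rw [hz i hi, zero_mul]
    rw [this, ← hA]
    simp
  · set c := A / s with hcdef
    have hc : 0 < c := div_pos hA hs
    have key : ∀ i, b i * x i * Real.log c + (b i * x i - b i * c)
        ≤ b i * x i * Real.log (x i) := by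
      intro i
      rcases eq_or_lt_of_le (hx i) with hxi | hxi
      · rw [← hxi]
        have : (0:ℝ) ≤ b i * c := mul_nonneg (hb i) hc.le
        simp; linarith
      · have hlog : 1 - c / x i ≤ Real.log (x i / c) := by
          have h1 : Real.log (c / x i) ≤ c / x i - 1 :=
            Real.log_le_sub_one_of_pos (div_pos hc hxi)
          have h2 : Real.log (c / x i) = - Real.log (x i / c) := by
            rw [← Real.log_inv]; congr 1; field_simp
          linarith [h2 ▸ h1]
        have hlog' : Real.log (x i / c) = Real.log (x i) - Real.log c :=
          Real.log_div (ne_of_gt hxi) (ne_of_gt hc)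
        have hbx : 0 ≤ b i * x i := mul_nonneg (hb i) (hx i)
        have h2 := mul_le_mul_of_nonneg_left hlog hbx
        have e1 : b i * x i * (1 - c / x i) = b i * x i - b i * c := by
          field_simp
        rw [hlog', e1, mul_sub] at h2
        linarith
    calc A * Real.log c = ∑ i, (b i * x i * Real.log c + (b i * x i - b i * c)) := by
          rw [Finset.sum_add_distrib, Finset.sum_sub_distrib, ← Finset.sum_mul,
            ← Finset.sum_mul, ← hAdef]
          have hsc : s * c = A := by rw [hcdef]; field_simp
          rw [hsc]; ring
      _ ≤ ∑ i, b i * x i * Real.log (x i) :=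
          Finset.sum_le_sum fun i _ => key i

/-- In the minimal case `x̃(j) = q(j)/d̃(j)`, the modified Shannon entropy does not
decrease: `H(p) ≤ H(q)`, where `p(i) = d(i)·x(i)`, `q(j) = Σ_i Π(j|i)·x(i)`,
`d(i) = Σ_j Π(j|i)` and `d̃(j) = Σ_i Π(j|i)`. -/
theorem minimal_case_entropy_increase {I J : Type*} [Fintype I] [Fintype J]
    (K : J → I → ℝ) (x : I → ℝ)
    (hK : ∀ j i, 0 ≤ K j i) (hx : ∀ i, 0 ≤ x i)
    (hd : ∀ i, 0 < ∑ j, K j i) (hdt : ∀ j, 0 < ∑ i, K j i)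
    (hP : ∑ i, ∑ j, K j i * x i = 1) :
    -∑ i, ((∑ j, K j i) * x i) * Real.log (((∑ j, K j i) * x i) / (∑ j, K j i)) ≤
      -∑ j, (∑ i, K j i * x i) * Real.log ((∑ i, K j i * x i) / (∑ i, K j i)) := by
  have hL : ∑ i, ((∑ j, K j i) * x i) * Real.log (((∑ j, K j i) * x i) / (∑ j, K j i))
      = ∑ j, ∑ i, K j i * x i * Real.log (x i) := by
    rw [Finset.sum_comm]
    refine Finset.sum_congr rfl fun i _ => ?_
    have h1 : ((∑ j, K j i) * x i) / (∑ j, K j i) = x i :=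
      mul_div_cancel_left₀ _ (ne_of_gt (hd i))
    rw [h1, Finset.sum_mul, Finset.sum_mul]
  rw [hL, neg_le_neg_iff]
  exact Finset.sum_le_sum fun j _ =>
    log_sum_key (fun i => K j i) x (hK j) hx (hdt j)
end

section
/- If (ρ, σ) is minimal in the sense that Tr(σ Q_j) = Tr(ρ Q_j) for all spectral eigenprojections Q_j of σ, then S(ρ) ≤ S(σ). -/
open Matrix
open scoped ComplexOrder

/-- Matrix logarithm via the spectral decomposition, with `log 0 = 0` on the kernel. -/
noncomputable def mlog {n : Type*} [Fintype n] [DecidableEq n] (A : Matrix n n ℂ) :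
    Matrix n n ℂ := by
  classical
  exact
    if hA : A.IsHermitian then
      (hA.eigenvectorUnitary : Matrix n n ℂ) *
        Matrix.diagonal (fun i => (Real.log (hA.eigenvalues i) : ℂ)) *
        (star (hA.eigenvectorUnitary : Matrix n n ℂ))
    else 0

/-- Von Neumann entropy `S(τ) = -Tr(τ log τ)`. -/
noncomputable def vnEntropy {n : Type*} [Fintype n] [DecidableEq n]
    (A : Matrix n n ℂ) : ℝ := -(A * mlog A).trace.re

lemma mlog_of_isHermitian {n : Type*} [Fintype n] [DecidableEq n] {A : Matrix n n ℂ}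
    (hA : A.IsHermitian) :
    mlog A = (hA.eigenvectorUnitary : Matrix n n ℂ) *
        Matrix.diagonal (fun i => (Real.log (hA.eigenvalues i) : ℂ)) *
        (star (hA.eigenvectorUnitary : Matrix n n ℂ)) := by
  rw [mlog, dif_pos hA]

lemma trace_mul_mlog {n : Type*} [Fintype n] [DecidableEq n] {A : Matrix n n ℂ}
    (hA : A.IsHermitian) :
    (A * mlog A).trace =
      ((∑ i, hA.eigenvalues i * Real.log (hA.eigenvalues i) : ℝ) : ℂ) := by
  set U := (hA.eigenvectorUnitary : Matrix n n ℂ) with hUdef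
  have hUU : star U * U = 1 := Unitary.coe_star_mul_self _
  have hD : star U * A * U = Matrix.diagonal (RCLike.ofReal ∘ hA.eigenvalues) :=
    (by have h := hA.conjStarAlgAut_star_eigenvectorUnitary; rw [Unitary.conjStarAlgAut_apply] at h; simpa [Unitary.coe_star] using h)
  rw [mlog_of_isHermitian hA, ← hUdef]
  have h1 : A * (U * Matrix.diagonal (fun i => (Real.log (hA.eigenvalues i) : ℂ)) * star U)
      = A * U * Matrix.diagonal (fun i => (Real.log (hA.eigenvalues i) : ℂ)) * star U := by
    noncomm_ring
  rw [h1, Matrix.trace_mul_cycle]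
  simp only [← mul_assoc]
  rw [hD, Matrix.diagonal_mul_diagonal, Matrix.trace_diagonal]
  push_cast
  rfl

lemma klein_scalar {ι J : Type*} [Fintype ι] [Fintype J] (p r : ι → ℝ) (q : ι → J → ℝ) (s : J → ℝ)
    (hp : ∀ i, 0 ≤ p i) (hs : ∀ j, 0 < s j) (hq : ∀ i j, 0 ≤ q i j)
    (hq1 : ∀ i, 0 < p i → ∑ j, q i j = 1)
    (hr : ∀ i, r i = ∑ j, q i j * s j)
    (hp1 : ∑ i, p i = 1) (hr1 : ∑ i, r i = 1) :
    ∑ j, Real.log (s j) * (∑ i, p i * q i j) ≤ ∑ i, p i * Real.log (p i) := by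
  classical
  have hrnn : ∀ i, 0 ≤ r i := fun i => by
    rw [hr i]; exact Finset.sum_nonneg fun j _ => mul_nonneg (hq i j) (hs j).le
  -- swap sums
  have hswap : ∑ j, Real.log (s j) * (∑ i, p i * q i j)
      = ∑ i, p i * (∑ j, q i j * Real.log (s j)) := by
    simp_rw [Finset.mul_sum]
    rw [Finset.sum_comm]
    refine Finset.sum_congr rfl fun i _ => Finset.sum_congr rfl fun j _ => by ring
  rw [hswap]
  set T : Finset ι := Finset.univ.filter (fun i => 0 < p i) with hT
  have hzero : ∀ i ∈ Finset.univ, i ∉ T → p i * (∑ j, q i j * Real.log (s j)) = 0 := by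
    intro i _ hiT
    have : ¬ 0 < p i := by simpa [hT] using hiT
    have : p i = 0 := le_antisymm (not_lt.mp this) (hp i)
    simp [this]
  have hzero' : ∀ i ∈ Finset.univ, i ∉ T → p i * Real.log (p i) = 0 := by
    intro i _ hiT
    have : ¬ 0 < p i := by simpa [hT] using hiT
    have : p i = 0 := le_antisymm (not_lt.mp this) (hp i)
    simp [this]
  rw [← Finset.sum_subset (Finset.subset_univ T) hzero,
    ← Finset.sum_subset (Finset.subset_univ T) hzero']
  -- per-element bound on T
  have key : ∀ i ∈ T, p i * (∑ j, q i j * Real.log (s j)) ≤ p i * Real.log (p i) + (r i - p i) := by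
    intro i hiT
    have hpi : 0 < p i := by simpa [hT] using hiT
    have hsumq : ∑ j, q i j = 1 := hq1 i hpi
    -- Jensen
    have hjensen : ∑ j, q i j * Real.log (s j) ≤ Real.log (r i) := by
      have := strictConcaveOn_log_Ioi.concaveOn.le_map_sum (t := Finset.univ)
        (w := q i) (p := s) (fun j _ => hq i j) hsumq (fun j _ => Set.mem_Ioi.mpr (hs j))
      simpa [smul_eq_mul, hr i] using this
    have hri : 0 < r i := by
      obtain ⟨j, hj⟩ : ∃ j, 0 < q i j := by
        by_contra h
        push_neg at h
        have : (∑ j, q i j) ≤ 0 := Finset.sum_nonpos fun j _ => h j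
        linarith [hsumq]
      rw [hr i]
      exact Finset.sum_pos' (fun j _ => mul_nonneg (hq i j) (hs j).le)
        ⟨j, Finset.mem_univ j, mul_pos hj (hs j)⟩
    have hlog : Real.log (r i) ≤ Real.log (p i) + (r i - p i) / p i := by
      have h1 := Real.log_le_sub_one_of_pos (div_pos hri hpi)
      rw [Real.log_div hri.ne' hpi.ne'] at h1
      have : (r i) / p i - 1 = (r i - p i) / p i := by field_simp
      linarith [this ▸ h1]
    calc p i * (∑ j, q i j * Real.log (s j)) ≤ p i * Real.log (r i) :=
          mul_le_mul_of_nonneg_left hjensen hpi.le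
      _ ≤ p i * (Real.log (p i) + (r i - p i) / p i) := mul_le_mul_of_nonneg_left hlog hpi.le
      _ = p i * Real.log (p i) + (r i - p i) := by field_simp
  calc ∑ i ∈ T, p i * (∑ j, q i j * Real.log (s j))
      ≤ ∑ i ∈ T, (p i * Real.log (p i) + (r i - p i)) := Finset.sum_le_sum key
    _ = ∑ i ∈ T, p i * Real.log (p i) + (∑ i ∈ T, r i - ∑ i ∈ T, p i) := by
        rw [Finset.sum_add_distrib, Finset.sum_sub_distrib]
    _ ≤ ∑ i ∈ T, p i * Real.log (p i) := by
        have h1 : ∑ i ∈ T, r i ≤ 1 := by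
          rw [← hr1]
          exact Finset.sum_le_sum_of_subset_of_nonneg (Finset.subset_univ T)
            (fun i _ _ => hrnn i)
        have h2 : ∑ i ∈ T, p i = 1 := by
          rw [← hp1]
          apply Finset.sum_subset (Finset.subset_univ T)
          intro i _ hiT
          have : ¬ 0 < p i := by simpa [hT] using hiT
          exact le_antisymm (not_lt.mp this) (hp i)
        linarith

lemma dotProduct_sum' {n J : Type*} [Fintype n] [Fintype J] (v : n → ℂ) (w : J → n → ℂ) :
    v ⬝ᵥ (∑ j, w j) = ∑ j, v ⬝ᵥ w j := by
  simp only [dotProduct, Finset.sum_apply, Finset.mul_sum]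
  rw [Finset.sum_comm]

lemma sum_mulVec' {n : Type*} {J : Type*} [Fintype n] [Fintype J]
    (f : J → Matrix n n ℂ) (v : n → ℂ) :
    (∑ j, f j) *ᵥ v = ∑ j, f j *ᵥ v := by
  funext k
  simp only [Matrix.mulVec, dotProduct, Matrix.sum_apply, Finset.sum_apply, Finset.sum_mul]
  rw [Finset.sum_comm]

lemma col_eig {n : Type*} [Fintype n] [DecidableEq n] {A : Matrix n n ℂ} (hA : A.IsHermitian)
    (i : n) :
    A *ᵥ (fun k => (hA.eigenvectorUnitary : Matrix n n ℂ) k i)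
      = (hA.eigenvalues i : ℂ) • (fun k => (hA.eigenvectorUnitary : Matrix n n ℂ) k i) := by
  set U := (hA.eigenvectorUnitary : Matrix n n ℂ) with hUdef
  have hUU' : U * star U = 1 := Unitary.coe_mul_star_self _
  have hAU : A * U = U * Matrix.diagonal (RCLike.ofReal ∘ hA.eigenvalues) := by
    calc A * U = (U * star U) * (A * U) := by rw [hUU', one_mul]
      _ = U * (star U * A * U) := by noncomm_ring
      _ = U * Matrix.diagonal (RCLike.ofReal ∘ hA.eigenvalues) := by
          rw [(show star U * A * U = Matrix.diagonal (RCLike.ofReal ∘ hA.eigenvalues) by have h := hA.conjStarAlgAut_star_eigenvectorUnitary; rw [Unitary.conjStarAlgAut_apply] at h; simpa [Unitary.coe_star] using h)]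
  funext k
  have h := Matrix.ext_iff.mpr hAU k i
  rw [Matrix.mul_diagonal] at h
  rw [Matrix.mul_apply] at h
  simp only [Matrix.mulVec, dotProduct, Pi.smul_apply, smul_eq_mul]
  rw [h]
  simp [Function.comp, mul_comm]

/-- If the pair `(ρ, σ)` is minimal, i.e. `Tr(σ Q_j) = Tr(ρ Q_j)` for all spectral
eigenprojections `Q_j` of `σ` (with distinct eigenvalues `s j > 0` on the support of
`σ`), then `S(ρ) ≤ S(σ)`. -/
theorem minimal_pair_entropy_le {d : ℕ} {J : Type*} [Fintype J]
    (ρ σ : Matrix (Fin d) (Fin d) ℂ)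
    (hρ : ρ.PosSemidef) (hρ1 : ρ.trace = 1)
    (hσ : σ.PosSemidef) (hσ1 : σ.trace = 1)
    (s : J → ℝ) (Q : J → Matrix (Fin d) (Fin d) ℂ)
    (hs : Function.Injective s) (hspos : ∀ j, 0 < s j)
    (hQh : ∀ j, (Q j).IsHermitian) (hQp : ∀ j, Q j * Q j = Q j)
    (hQo : ∀ j j', j ≠ j' → Q j * Q j' = 0)
    (hσdec : σ = ∑ j, (s j : ℂ) • Q j)
    (hsupp : ∀ v : Fin d → ℂ, σ.mulVec v = 0 → ρ.mulVec v = 0)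
    (hmin : ∀ j, (σ * Q j).trace = (ρ * Q j).trace) :
    vnEntropy ρ ≤ vnEntropy σ := by
  classical
  have hρh : ρ.IsHermitian := hρ.1
  have hσh : σ.IsHermitian := hσ.1
  -- algebra of the projections
  have hQσmul : ∀ k, Q k * σ = (s k : ℂ) • Q k := by
    intro k
    rw [hσdec, Finset.mul_sum]
    rw [Finset.sum_eq_single k (fun b _ hb => by
      rw [mul_smul_comm, hQo k b (Ne.symm hb), smul_zero]) (by simp)]
    rw [mul_smul_comm, hQp k]
  have hσQmul : ∀ k, σ * Q k = (s k : ℂ) • Q k := by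
    intro k
    rw [hσdec, Finset.sum_mul]
    rw [Finset.sum_eq_single k (fun b _ hb => by
      rw [smul_mul_assoc, hQo b k hb, smul_zero]) (by simp)]
    rw [smul_mul_assoc, hQp k]
  have hLmul : ∀ v : Fin d → ℂ,
      (∑ j, (Real.log (s j) : ℂ) • Q j) *ᵥ v = ∑ k, (Real.log (s k) : ℂ) • (Q k *ᵥ v) := by
    intro v
    rw [sum_mulVec']
    exact Finset.sum_congr rfl fun k _ => Matrix.smul_mulVec _ _ _
  have hσmulv : ∀ v : Fin d → ℂ, σ *ᵥ v = ∑ k, (s k : ℂ) • (Q k *ᵥ v) := by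
    intro v
    rw [hσdec, sum_mulVec']
    exact Finset.sum_congr rfl fun k _ => Matrix.smul_mulVec _ _ _
  -- mlog σ = ∑ log s_j • Q_j
  have hmlogσ : mlog σ = ∑ j, (Real.log (s j) : ℂ) • Q j := by
    set L := ∑ j, (Real.log (s j) : ℂ) • Q j with hLdef
    set W := (hσh.eigenvectorUnitary : Matrix (Fin d) (Fin d) ℂ) with hWdef
    have hWW' : W * star W = 1 := Unitary.coe_mul_star_self _
    have key : ∀ i, L *ᵥ (fun k => W k i)
        = (Real.log (hσh.eigenvalues i) : ℂ) • (fun k => W k i) := by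
      intro i
      set μ := hσh.eigenvalues i with hμdef
      set v : Fin d → ℂ := fun k => W k i with hvdef
      have hv : σ *ᵥ v = (μ : ℂ) • v := col_eig hσh i
      have hQv0 : ∀ k, s k ≠ μ → Q k *ᵥ v = 0 := by
        intro k hk
        have e1 : Q k *ᵥ (σ *ᵥ v) = (Q k * σ) *ᵥ v := Matrix.mulVec_mulVec _ _ _
        rw [hv, hQσmul k] at e1
        have h1 : (μ : ℂ) • (Q k *ᵥ v) = (s k : ℂ) • (Q k *ᵥ v) := by
          simpa [Matrix.mulVec_smul, Matrix.smul_mulVec] using e1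
        have h2 : ((μ : ℂ) - (s k : ℂ)) • (Q k *ᵥ v) = 0 := by
          rw [sub_smul, h1, sub_self]
        rcases smul_eq_zero.mp h2 with h | h
        · exfalso
          apply hk
          have : (s k : ℂ) = (μ : ℂ) := by linear_combination -h
          exact_mod_cast this
        · exact h
      by_cases hμ0 : μ = 0
      · have hall : ∀ k, Q k *ᵥ v = 0 := fun k => hQv0 k (by rw [hμ0]; exact (hspos k).ne')
        rw [hLmul v]
        simp [hall, hμ0]
      · by_cases hex : ∃ j, s j = μ
        · obtain ⟨j, hj⟩ := hex
          have hoth : ∀ k, k ≠ j → Q k *ᵥ v = 0 := fun k hk =>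
            hQv0 k (fun h => hk (hs (h.trans hj.symm)))
          have hσv : (s j : ℂ) • (Q j *ᵥ v) = (μ : ℂ) • v := by
            rw [← hv, hσmulv v]
            rw [Finset.sum_eq_single j (fun b _ hb => by rw [hoth b hb, smul_zero]) (by simp)]
          have hμne : (μ : ℂ) ≠ 0 := by exact_mod_cast hμ0
          have hQjv : Q j *ᵥ v = v := by
            rw [hj] at hσv
            exact smul_right_injective _ hμne hσv
          rw [hLmul v]
          rw [Finset.sum_eq_single j (fun b _ hb => by rw [hoth b hb, smul_zero]) (by simp)]
          rw [hQjv, hj]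
        · push_neg at hex
          have hall : ∀ k, Q k *ᵥ v = 0 := fun k => hQv0 k (hex k)
          have hv0 : v = 0 := by
            have h0 : (μ : ℂ) • v = 0 := by rw [← hv, hσmulv v]; simp [hall]
            rcases smul_eq_zero.mp h0 with h | h
            · exact absurd (by exact_mod_cast h) hμ0
            · exact h
          rw [hLmul v]
          simp [hall, hv0]
    have hLW : L * W = W * Matrix.diagonal (fun i => (Real.log (hσh.eigenvalues i) : ℂ)) := by
      ext k i
      have h := congrFun (key i) k
      simp only [Matrix.mulVec, dotProduct, Pi.smul_apply, smul_eq_mul] at h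
      rw [Matrix.mul_apply, Matrix.mul_diagonal]
      linear_combination h
    have hfin : L = W * Matrix.diagonal (fun i => (Real.log (hσh.eigenvalues i) : ℂ)) * star W := by
      calc L = L * 1 := (mul_one L).symm
        _ = L * (W * star W) := by rw [hWW']
        _ = (L * W) * star W := by rw [mul_assoc]
        _ = W * Matrix.diagonal (fun i => (Real.log (hσh.eigenvalues i) : ℂ)) * star W := by
            rw [hLW]
    rw [mlog_of_isHermitian hσh, ← hWdef]
    exact hfin.symm
  -- entropy of σ via the minimality hypothesis
  have htraceσ : (σ * mlog σ).trace = ∑ j, (Real.log (s j) : ℂ) * (ρ * Q j).trace := by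
    rw [hmlogσ, Finset.mul_sum, Matrix.trace_sum]
    refine Finset.sum_congr rfl fun j _ => ?_
    rw [mul_smul_comm, Matrix.trace_smul, smul_eq_mul, hmin j]
  -- eigen-data of ρ
  set p : Fin d → ℝ := hρh.eigenvalues with hpdef
  have hpnn : ∀ i, 0 ≤ p i := fun i => hρ.eigenvalues_nonneg i
  set U := (hρh.eigenvectorUnitary : Matrix (Fin d) (Fin d) ℂ) with hUdef
  have hUU : star U * U = 1 := Unitary.coe_star_mul_self _
  have hUU' : U * star U = 1 := Unitary.coe_mul_star_self _
  set u : Fin d → Fin d → ℂ := fun i k => U k i with hudef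
  have hu : ∀ i, ρ *ᵥ u i = (p i : ℂ) • u i := fun i => col_eig hρh i
  have sum_dot : ∀ M : Matrix (Fin d) (Fin d) ℂ,
      ∑ i, star (u i) ⬝ᵥ (M *ᵥ u i) = M.trace := by
    intro M
    have h1 : ∀ i, star (u i) ⬝ᵥ (M *ᵥ u i) = (star U * (M * U)) i i := by
      intro i
      simp [Matrix.mul_apply, Matrix.mulVec, dotProduct, Matrix.star_apply, hudef,
        Finset.mul_sum]
    simp_rw [h1]
    have h2 : ∑ i, (star U * (M * U)) i i = (star U * (M * U)).trace := rfl
    rw [h2, ← mul_assoc, Matrix.trace_mul_cycle, hUU', one_mul]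
  -- q and its properties
  have hQpsd : ∀ j, (Q j).PosSemidef := by
    intro j
    have h : (Q j)ᴴ * Q j = Q j := by rw [hQh j]; exact hQp j
    rw [← h]
    exact Matrix.posSemidef_conjTranspose_mul_self _
  have hcpos : ∀ i j, 0 ≤ star (u i) ⬝ᵥ (Q j *ᵥ u i) := fun i j => (hQpsd j).dotProduct_mulVec_nonneg (u i)
  set q : Fin d → J → ℝ := fun i j => (star (u i) ⬝ᵥ (Q j *ᵥ u i)).re with hqdef
  have hcq : ∀ i j, star (u i) ⬝ᵥ (Q j *ᵥ u i) = ((q i j : ℝ) : ℂ) := by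
    intro i j
    obtain ⟨-, him⟩ := Complex.le_def.mp (hcpos i j)
    apply Complex.ext
    · simp [hqdef]
    · simp [← him]
  have hqnn : ∀ i j, 0 ≤ q i j := by
    intro i j
    have := (Complex.le_def.mp (hcpos i j)).1
    simpa [hqdef] using this
  have hnorm : ∀ i, star (u i) ⬝ᵥ u i = 1 := by
    intro i
    have h := Matrix.ext_iff.mpr hUU i i
    rw [Matrix.mul_apply] at h
    simpa [Matrix.star_apply, Matrix.one_apply, dotProduct, hudef] using h
  -- the support projection
  set P := ∑ j, Q j with hPdef
  have hσP : σ * P = σ := by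
    rw [hPdef, Finset.mul_sum]
    simp_rw [hσQmul]
    exact hσdec.symm
  have hPh : Pᴴ = P := by
    rw [hPdef, Matrix.conjTranspose_sum]
    exact Finset.sum_congr rfl fun j _ => hQh j
  have hPP : P * P = P := by
    rw [hPdef, Finset.sum_mul_sum]
    refine Finset.sum_congr rfl fun j _ => ?_
    rw [Finset.sum_eq_single j (fun b _ hb => hQo j b (Ne.symm hb)) (by simp), hQp j]
  have h1Ppsd : (1 - P).PosSemidef := by
    have h2 : (1 - P)ᴴ * (1 - P) = 1 - P := by
      rw [Matrix.conjTranspose_sub, Matrix.conjTranspose_one, hPh]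
      have h3 : (1 - P) * (1 - P) = 1 - P - P + P * P := by noncomm_ring
      rw [h3, hPP]
      abel
    rw [← h2]
    exact Matrix.posSemidef_conjTranspose_mul_self _
  have hdotw : ∀ i, star (u i) ⬝ᵥ (u i - P *ᵥ u i) = 1 - ∑ j, ((q i j : ℝ) : ℂ) := by
    intro i
    rw [dotProduct_sub, hnorm i, hPdef, sum_mulVec', dotProduct_sum']
    simp_rw [hcq]
  have hqle1 : ∀ i, ∑ j, q i j ≤ 1 := by
    intro i
    have h0 := h1Ppsd.dotProduct_mulVec_nonneg (u i)
    rw [Matrix.sub_mulVec, Matrix.one_mulVec, hdotw i] at h0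
    have h1 := (Complex.le_def.mp h0).1
    have h2 : (1 - ∑ j, ((q i j : ℝ) : ℂ)).re = 1 - ∑ j, q i j := by
      push_cast
      simp
    rw [h2] at h1
    simp only [Complex.zero_re] at h1
    linarith
  have hq1 : ∀ i, 0 < p i → ∑ j, q i j = 1 := by
    intro i hpi
    have hw : σ *ᵥ (u i - P *ᵥ u i) = 0 := by
      rw [Matrix.mulVec_sub, Matrix.mulVec_mulVec, hσP, sub_self]
    have hρw := hsupp _ hw
    have e : star (ρ *ᵥ u i) ⬝ᵥ (u i - P *ᵥ u i) = star (u i) ⬝ᵥ (ρ *ᵥ (u i - P *ᵥ u i)) := by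
      rw [Matrix.star_mulVec, hρh, Matrix.dotProduct_mulVec]
    rw [hρw, dotProduct_zero, hu i] at e
    rw [star_smul, smul_dotProduct] at e
    have e2 : (p i : ℂ) * (star (u i) ⬝ᵥ (u i - P *ᵥ u i)) = 0 := by
      simpa [Complex.conj_ofReal, smul_eq_mul] using e
    have hne : (p i : ℂ) ≠ 0 := by exact_mod_cast hpi.ne'
    have hdot0 := (mul_eq_zero.mp e2).resolve_left hne
    rw [hdotw i] at hdot0
    have h3 : ((∑ j, q i j : ℝ) : ℂ) = ((1 : ℝ) : ℂ) := by
      push_cast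
      linear_combination -hdot0
    exact_mod_cast h3
  -- trace identities
  have hTrρQ : ∀ j, (ρ * Q j).trace = ∑ i, (p i : ℂ) * (star (u i) ⬝ᵥ (Q j *ᵥ u i)) := by
    intro j
    rw [Matrix.trace_mul_comm, ← sum_dot (Q j * ρ)]
    refine Finset.sum_congr rfl fun i _ => ?_
    rw [← Matrix.mulVec_mulVec, hu i, Matrix.mulVec_smul, dotProduct_smul, smul_eq_mul]
  have hp1 : ∑ i, p i = 1 := by
    have h := sum_dot ρ
    rw [hρ1] at h
    have h2 : ∀ i, star (u i) ⬝ᵥ (ρ *ᵥ u i) = ((p i : ℝ) : ℂ) := by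
      intro i
      rw [hu i, dotProduct_smul, hnorm i, smul_eq_mul, mul_one]
    rw [Finset.sum_congr rfl (fun i _ => h2 i)] at h
    have h3 : ((∑ i, p i : ℝ) : ℂ) = ((1 : ℝ) : ℂ) := by push_cast; exact h
    exact_mod_cast h3
  set r : Fin d → ℝ := fun i => ∑ j, q i j * s j with hrdef
  have hr1 : ∑ i, r i = 1 := by
    have h1 : ∑ j, (s j : ℂ) * (Q j).trace = 1 := by
      have h : σ.trace = ∑ j, (s j : ℂ) * (Q j).trace := by
        rw [hσdec, Matrix.trace_sum]
        exact Finset.sum_congr rfl fun j _ => by rw [Matrix.trace_smul, smul_eq_mul]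
      rw [← h, hσ1]
    have h2 : ((∑ i, r i : ℝ) : ℂ) = ∑ j, (s j : ℂ) * (Q j).trace := by
      push_cast [hrdef]
      rw [Finset.sum_comm]
      refine Finset.sum_congr rfl fun j _ => ?_
      rw [← sum_dot (Q j)]
      simp_rw [hcq]
      rw [Finset.mul_sum]
      exact Finset.sum_congr rfl fun i _ => by ring
    have h3 : ((∑ i, r i : ℝ) : ℂ) = ((1 : ℝ) : ℂ) := by rw [h2, h1]; push_cast; ring
    exact_mod_cast h3
  -- entropies in real terms
  have hEρ : (ρ * mlog ρ).trace.re = ∑ i, p i * Real.log (p i) := by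
    rw [trace_mul_mlog hρh, Complex.ofReal_re]
  have hEσ : (σ * mlog σ).trace.re = ∑ j, Real.log (s j) * (∑ i, p i * q i j) := by
    rw [htraceσ]
    have e : ∑ j, (Real.log (s j) : ℂ) * (ρ * Q j).trace
        = ((∑ j, Real.log (s j) * (∑ i, p i * q i j) : ℝ) : ℂ) := by
      push_cast
      refine Finset.sum_congr rfl fun j _ => ?_
      rw [hTrρQ j]
      simp_rw [hcq]
      try push_cast
      try ring
    rw [e, Complex.ofReal_re]
  have hkey := klein_scalar p r q s hpnn hspos hqnn hq1 (fun i => rfl) hp1 hr1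
  simp only [vnEntropy]
  rw [hEρ, hEσ]
  linarith
end

section
/- Lüders measurements increase entropy: if (P_n) is a finite family of mutually orthogonal projections summing to the identity and σ = Σ_n P_n ρ P_n, then S(ρ) ≤ S(σ). -/
open Matrix
open scoped ComplexOrder

lemma vnEntropy_eq_sum {n : Type*} [Fintype n] [DecidableEq n] {A : Matrix n n ℂ}
    (hA : A.IsHermitian) :
    vnEntropy A = ∑ i, Real.negMulLog (hA.eigenvalues i) := by
  have hU : (star (hA.eigenvectorUnitary : Matrix n n ℂ)) * hA.eigenvectorUnitary = 1 :=
    (Matrix.mem_unitaryGroup_iff').mp hA.eigenvectorUnitary.2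
  have hml : mlog A = (hA.eigenvectorUnitary : Matrix n n ℂ) *
      Matrix.diagonal (fun i => (Real.log (hA.eigenvalues i) : ℂ)) *
      (star (hA.eigenvectorUnitary : Matrix n n ℂ)) := by
    rw [mlog, dif_pos hA]
  have key : A * mlog A = (hA.eigenvectorUnitary : Matrix n n ℂ) *
      Matrix.diagonal (fun i => (hA.eigenvalues i : ℂ) * (Real.log (hA.eigenvalues i) : ℂ)) *
      (star (hA.eigenvectorUnitary : Matrix n n ℂ)) := by
    rw [hml]
    conv_lhs => lhs; rw [hA.spectral_theorem, Unitary.conjStarAlgAut_apply]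
    rw [← diagonal_mul_diagonal]
    simp only [mul_assoc]
    rw [← mul_assoc (star (hA.eigenvectorUnitary : Matrix n n ℂ))
      (hA.eigenvectorUnitary : Matrix n n ℂ), hU, one_mul]
    rfl
  rw [vnEntropy, key, Matrix.trace_mul_cycle, hU, one_mul, Matrix.trace_diagonal]
  simp [← Complex.ofReal_mul, Complex.re_sum, Real.negMulLog, Finset.sum_neg_distrib, neg_mul]

lemma conj_diag_apply {m k : Type*} [Fintype k] [DecidableEq k]
    (M : Matrix m k ℂ) (g : k → ℂ) (j : m) :
    (M * Matrix.diagonal g * Mᴴ) j j = ∑ i, g i * (Complex.normSq (M j i) : ℂ) := by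
  rw [Matrix.mul_apply]
  refine Finset.sum_congr rfl fun i _ => ?_
  rw [Matrix.mul_diagonal, Matrix.conjTranspose_apply, Complex.star_def,
    mul_comm (M j i) (g i), mul_assoc, Complex.mul_conj]

lemma mul_conjTranspose_diag {m k : Type*} [Fintype k]
    (M : Matrix m k ℂ) (j : m) :
    (M * Mᴴ) j j = ∑ i, (Complex.normSq (M j i) : ℂ) := by
  rw [Matrix.mul_apply]
  refine Finset.sum_congr rfl fun i _ => ?_
  rw [Matrix.conjTranspose_apply, Complex.star_def, Complex.mul_conj]

lemma conjTranspose_mul_diag {m k : Type*} [Fintype m]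
    (M : Matrix m k ℂ) (i : k) :
    (Mᴴ * M) i i = ∑ j, (Complex.normSq (M j i) : ℂ) := by
  rw [Matrix.mul_apply]
  refine Finset.sum_congr rfl fun j _ => ?_
  rw [Matrix.conjTranspose_apply, Complex.star_def, mul_comm, Complex.mul_conj]

/-- Lüders measurements increase entropy: if `(P n)` is a finite family of mutually
orthogonal projections summing to the identity and `σ = Σ_n P_n ρ P_n`, then
`S(ρ) ≤ S(σ)`. -/
theorem luders_entropy_increase {d : ℕ} {N : Type*} [Fintype N]
    (ρ : Matrix (Fin d) (Fin d) ℂ)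
    (hρ : ρ.PosSemidef) (hρ1 : ρ.trace = 1)
    (P : N → Matrix (Fin d) (Fin d) ℂ)
    (hPh : ∀ n, (P n).IsHermitian) (hPp : ∀ n, P n * P n = P n)
    (hPo : ∀ n n', n ≠ n' → P n * P n' = 0) (hPsum : ∑ n, P n = 1) :
    vnEntropy ρ ≤ vnEntropy (∑ n, P n * ρ * P n) := by
  classical
  have hρh := hρ.1
  have hσh : (∑ n, P n * ρ * P n).IsHermitian := by
    rw [Matrix.IsHermitian, Matrix.conjTranspose_sum]
    refine Finset.sum_congr rfl fun n _ => ?_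
    simp [Matrix.conjTranspose_mul, (hPh n).eq, hρh.eq, mul_assoc]
  set V : Matrix (Fin d) (Fin d) ℂ := (hρh.eigenvectorUnitary : Matrix (Fin d) (Fin d) ℂ) with hVdef
  set U : Matrix (Fin d) (Fin d) ℂ := (hσh.eigenvectorUnitary : Matrix (Fin d) (Fin d) ℂ) with hUdef
  set lam : Fin d → ℝ := hρh.eigenvalues with hlamdef
  set mu : Fin d → ℝ := hσh.eigenvalues with hmudef
  have hVVs : V * star V = 1 := Matrix.mem_unitaryGroup_iff.mp hρh.eigenvectorUnitary.2
  have hVsV : star V * V = 1 := Matrix.mem_unitaryGroup_iff'.mp hρh.eigenvectorUnitary.2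
  have hUUs : U * star U = 1 := Matrix.mem_unitaryGroup_iff.mp hσh.eigenvectorUnitary.2
  have hUsU : star U * U = 1 := Matrix.mem_unitaryGroup_iff'.mp hσh.eigenvectorUnitary.2
  set B : N → Matrix (Fin d) (Fin d) ℂ := fun n => star U * P n * V with hBdef
  have hBH : ∀ n, (B n)ᴴ = star V * P n * U := by
    intro n
    simp [hBdef, Matrix.star_eq_conjTranspose, Matrix.conjTranspose_mul,
      Matrix.conjTranspose_conjTranspose, (hPh n).eq, mul_assoc]
  -- (1) conjugated summands
  have h1 : ∀ n, star U * (P n * ρ * P n) * U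
      = B n * Matrix.diagonal (RCLike.ofReal ∘ lam) * (B n)ᴴ := by
    intro n
    rw [hBH n]
    conv_lhs => rw [hρh.spectral_theorem, Unitary.conjStarAlgAut_apply, ← hVdef, ← hlamdef]
    simp only [hBdef, mul_assoc]
  -- (2) B n * (B n)ᴴ = star U * P n * U
  have h2 : ∀ n, B n * (B n)ᴴ = star U * P n * U := by
    intro n
    rw [hBH n, hBdef]
    simp only [mul_assoc]
    rw [← mul_assoc V (star V), hVVs, one_mul, ← mul_assoc (P n) (P n), hPp n]
  -- (3) (B n)ᴴ * B n = star V * P n * V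
  have h3 : ∀ n, (B n)ᴴ * B n = star V * P n * V := by
    intro n
    rw [hBH n, hBdef]
    simp only [mul_assoc]
    rw [← mul_assoc U (star U), hUUs, one_mul, ← mul_assoc (P n) (P n), hPp n]
  -- row sums of D equal 1
  have hrow : ∀ j, ∑ i, ∑ n, Complex.normSq (B n j i) = (1 : ℝ) := by
    intro j
    have hm : (∑ n, B n * (B n)ᴴ) = 1 := by
      calc ∑ n, B n * (B n)ᴴ = ∑ n, star U * P n * U :=
            Finset.sum_congr rfl fun n _ => h2 n
        _ = star U * (∑ n, P n) * U := by rw [Finset.mul_sum, Finset.sum_mul]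
        _ = 1 := by rw [hPsum, mul_one, hUsU]
    have e : ∑ n, ∑ i, (Complex.normSq (B n j i) : ℂ) = 1 := by
      calc ∑ n, ∑ i, (Complex.normSq (B n j i) : ℂ)
          = ∑ n, (B n * (B n)ᴴ) j j :=
            Finset.sum_congr rfl fun n _ => (mul_conjTranspose_diag _ j).symm
        _ = (∑ n, B n * (B n)ᴴ) j j := by rw [Matrix.sum_apply]
        _ = 1 := by rw [hm, Matrix.one_apply_eq]
    rw [Finset.sum_comm]
    exact_mod_cast e
  -- column sums of D equal 1
  have hcol : ∀ i, ∑ j, ∑ n, Complex.normSq (B n j i) = (1 : ℝ) := by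
    intro i
    have hm : (∑ n, (B n)ᴴ * B n) = 1 := by
      calc ∑ n, (B n)ᴴ * B n = ∑ n, star V * P n * V :=
            Finset.sum_congr rfl fun n _ => h3 n
        _ = star V * (∑ n, P n) * V := by rw [Finset.mul_sum, Finset.sum_mul]
        _ = 1 := by rw [hPsum, mul_one, hVsV]
    have e : ∑ n, ∑ j, (Complex.normSq (B n j i) : ℂ) = 1 := by
      calc ∑ n, ∑ j, (Complex.normSq (B n j i) : ℂ)
          = ∑ n, ((B n)ᴴ * B n) i i :=
            Finset.sum_congr rfl fun n _ => (conjTranspose_mul_diag _ i).symm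
        _ = (∑ n, (B n)ᴴ * B n) i i := by rw [Matrix.sum_apply]
        _ = 1 := by rw [hm, Matrix.one_apply_eq]
    rw [Finset.sum_comm]
    exact_mod_cast e
  -- eigenvalues of σ as mixtures of eigenvalues of ρ
  have hmu : ∀ j, mu j = ∑ i, (∑ n, Complex.normSq (B n j i)) * lam i := by
    intro j
    have hd := hσh.conjStarAlgAut_star_eigenvectorUnitary
    rw [Unitary.conjStarAlgAut_apply, Unitary.coe_star, star_star] at hd
    have e : (mu j : ℂ) = ∑ n, ∑ i, (lam i : ℂ) * (Complex.normSq (B n j i) : ℂ) := by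
      calc (mu j : ℂ) = Matrix.diagonal (RCLike.ofReal ∘ mu) j j := by
            rw [Matrix.diagonal_apply_eq]; rfl
        _ = (star U * (∑ n, P n * ρ * P n) * U) j j := by rw [hd]
        _ = (∑ n, star U * (P n * ρ * P n) * U) j j := by
            rw [Finset.mul_sum, Finset.sum_mul]
        _ = ∑ n, (star U * (P n * ρ * P n) * U) j j := by rw [Matrix.sum_apply]
        _ = ∑ n, ∑ i, (lam i : ℂ) * (Complex.normSq (B n j i) : ℂ) := by
            refine Finset.sum_congr rfl fun n _ => ?_
            rw [h1 n, conj_diag_apply]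
            rfl
    have e2 : mu j = ∑ n, ∑ i, lam i * Complex.normSq (B n j i) := by exact_mod_cast e
    rw [e2, Finset.sum_comm]
    refine Finset.sum_congr rfl fun i _ => ?_
    rw [← Finset.mul_sum, mul_comm]
  -- Jensen for each eigenvalue of σ
  have jensen : ∀ j, ∑ i, (∑ n, Complex.normSq (B n j i)) * Real.negMulLog (lam i)
      ≤ Real.negMulLog (mu j) := by
    intro j
    have h := Real.concaveOn_negMulLog.le_map_sum
      (t := Finset.univ) (w := fun i => ∑ n, Complex.normSq (B n j i)) (p := lam)
      (fun i _ => Finset.sum_nonneg fun n _ => Complex.normSq_nonneg _) (hrow j)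
      (fun i _ => Set.mem_Ici.mpr (hρ.eigenvalues_nonneg i))
    have h2' : ∑ i, (∑ n, Complex.normSq (B n j i)) * Real.negMulLog (lam i)
        ≤ Real.negMulLog (∑ i, (∑ n, Complex.normSq (B n j i)) * lam i) := by
      simpa [smul_eq_mul] using h
    rwa [← hmu j] at h2'
  rw [vnEntropy_eq_sum hρh, vnEntropy_eq_sum hσh, ← hlamdef, ← hmudef]
  calc ∑ i, Real.negMulLog (lam i)
      = ∑ i, (∑ j, ∑ n, Complex.normSq (B n j i)) * Real.negMulLog (lam i) := by
        refine Finset.sum_congr rfl fun i _ => ?_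
        rw [hcol i, one_mul]
    _ = ∑ j, ∑ i, (∑ n, Complex.normSq (B n j i)) * Real.negMulLog (lam i) := by
        simp only [Finset.sum_mul]
        exact Finset.sum_comm
    _ ≤ ∑ j, Real.negMulLog (mu j) := Finset.sum_le_sum fun j _ => jensen j
end

section
/- Counter-example to the converse of the minimality criterion: for ρ = |φ⟩⟨φ| with φ = (1/2)(|↑↓⟩ + √3|↓↑⟩) in ℂ²⊗ℂ² and σ = ρ₁ ⊗ ρ₂ the tensor product of the partial traces of ρ, one has S(ρ‖σ) = S(σ) - S(ρ), but the pair (ρ, σ) is not minimal: there exists a spectral eigenprojection Q of σ with Tr(σ Q) ≠ Tr(ρ Q). -/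
open Matrix
open scoped ComplexOrder

/-- The spectral eigenprojection of a Hermitian matrix `A` for the eigenvalue `c`. -/
noncomputable def eigProj {n : Type*} [Fintype n] [DecidableEq n]
    (A : Matrix n n ℂ) (c : ℝ) : Matrix n n ℂ := by
  classical
  exact
    if hA : A.IsHermitian then
      (hA.eigenvectorUnitary : Matrix n n ℂ) *
        Matrix.diagonal (fun i => if hA.eigenvalues i = c then (1 : ℂ) else 0) *
        (star (hA.eigenvectorUnitary : Matrix n n ℂ))
    else 0

/-- The projector `ρ = |φ⟩⟨φ|` onto `φ = (1/2)(|↑↓⟩ + √3 |↓↑⟩)`, written in the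
standard basis of `ℂ² ⊗ ℂ² ≅ ℂ⁴`. -/
noncomputable def ρcex : Matrix (Fin 4) (Fin 4) ℂ :=
  !![0, 0, 0, 0;
     0, 1/4, (Real.sqrt 3 : ℂ)/4, 0;
     0, (Real.sqrt 3 : ℂ)/4, 3/4, 0;
     0, 0, 0, 0]

/-- The product of the partial traces `σ = ρ₁ ⊗ ρ₂`, diagonal in the standard basis. -/
noncomputable def σcex : Matrix (Fin 4) (Fin 4) ℂ :=
  Matrix.diagonal ![3/16, 1/16, 9/16, 3/16]

variable {n : Type*} [Fintype n] [DecidableEq n]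

lemma conj_diag (d : n → ℝ) (hA : (Matrix.diagonal (fun i => (d i : ℂ))).IsHermitian)
    (g : ℝ → ℝ) :
    (hA.eigenvectorUnitary : Matrix n n ℂ) *
      Matrix.diagonal (fun i => (g (hA.eigenvalues i) : ℂ)) *
      (star (hA.eigenvectorUnitary : Matrix n n ℂ)) =
    Matrix.diagonal (fun i => (g (d i) : ℂ)) := by
  set U := (hA.eigenvectorUnitary : Matrix n n ℂ) with hU
  have hUU : U * star U = 1 := (Matrix.mem_unitaryGroup_iff).mp hA.eigenvectorUnitary.2
  have hsUU : star U * U = 1 := (Matrix.mem_unitaryGroup_iff').mp hA.eigenvectorUnitary.2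
  have hAU : Matrix.diagonal (fun i => (d i : ℂ)) * U =
      U * Matrix.diagonal (fun i => (hA.eigenvalues i : ℂ)) := by
    conv_lhs => rw [hA.spectral_theorem, Unitary.conjStarAlgAut_apply, ← hU]
    rw [mul_assoc, mul_assoc, hsUU, mul_one]
    rfl
  have key : ∀ i j, (d i : ℂ) * U i j = U i j * (hA.eigenvalues j : ℂ) := by
    intro i j
    have := congrFun (congrFun hAU i) j
    simpa [Matrix.diagonal_mul, Matrix.mul_diagonal] using this
  ext i k
  have h1 : (U * Matrix.diagonal (fun i => (g (hA.eigenvalues i) : ℂ)) * star U) i k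
      = ∑ j, U i j * (g (hA.eigenvalues j) : ℂ) * (starRingEnd ℂ) (U k j) := by
    rw [mul_assoc]
    simp [Matrix.mul_apply, Matrix.diagonal_apply, Matrix.star_apply, mul_assoc, ite_mul,
      Finset.sum_ite_eq]
  rw [h1]
  have h2 : ∀ j, U i j * (g (hA.eigenvalues j) : ℂ) * (starRingEnd ℂ) (U k j)
      = (g (d i) : ℂ) * (U i j * (starRingEnd ℂ) (U k j)) := by
    intro j
    by_cases h : U i j = 0
    · simp [h]
    · have hd : d i = hA.eigenvalues j := by
        have hkey := key i j
        rw [mul_comm ((d i : ℂ)) (U i j)] at hkey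
        exact Complex.ofReal_inj.mp (mul_left_cancel₀ h hkey)
      rw [hd]; ring
  rw [Finset.sum_congr rfl (fun j _ => h2 j), ← Finset.mul_sum]
  have h3 : ∑ j, U i j * (starRingEnd ℂ) (U k j) = (1 : Matrix n n ℂ) i k := by
    rw [← hUU]; simp [Matrix.mul_apply, Matrix.star_apply]
  rw [h3]
  by_cases h : i = k <;> simp [h, Matrix.one_apply, Matrix.diagonal_apply]

lemma mlog_proj_aux {A : Matrix n n ℂ} (hA : A.IsHermitian) (hP : A * A = A) :
    (hA.eigenvectorUnitary : Matrix n n ℂ) *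
      Matrix.diagonal (fun i => (Real.log (hA.eigenvalues i) : ℂ)) *
      (star (hA.eigenvectorUnitary : Matrix n n ℂ)) = 0 := by
  set U := (hA.eigenvectorUnitary : Matrix n n ℂ) with hU
  have hD : star U * A * U = Matrix.diagonal (fun i => (hA.eigenvalues i : ℂ)) :=
    by have h := hA.conjStarAlgAut_star_eigenvectorUnitary
       rw [Unitary.conjStarAlgAut_star_apply] at h
       exact h
  have hUU : U * star U = 1 := (Matrix.mem_unitaryGroup_iff).mp hA.eigenvectorUnitary.2
  have hDD : Matrix.diagonal (fun i => (hA.eigenvalues i : ℂ)) *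
      Matrix.diagonal (fun i => (hA.eigenvalues i : ℂ)) =
      Matrix.diagonal (fun i => (hA.eigenvalues i : ℂ)) := by
    rw [← hD]
    calc star U * A * U * (star U * A * U) = star U * (A * (U * star U) * A) * U := by
          noncomm_ring
      _ = star U * A * U := by rw [hUU, mul_one, hP]
  have heig : ∀ i, Real.log (hA.eigenvalues i) = 0 := by
    intro i
    have h2 : (hA.eigenvalues i : ℂ) * (hA.eigenvalues i : ℂ) = (hA.eigenvalues i : ℂ) := by
      have := congrFun (congrFun hDD i) i
      simpa [Matrix.diagonal_apply] using this
    have h3 : hA.eigenvalues i * hA.eigenvalues i = hA.eigenvalues i := by exact_mod_cast h2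
    have h4 : hA.eigenvalues i = 0 ∨ hA.eigenvalues i = 1 := by
      rcases mul_eq_zero.mp (by nlinarith : hA.eigenvalues i * (hA.eigenvalues i - 1) = 0) with h | h
      · exact Or.inl h
      · exact Or.inr (by linarith)
    rcases h4 with h | h <;> simp [h]
  have : Matrix.diagonal (fun i => (Real.log (hA.eigenvalues i) : ℂ)) = 0 := by
    ext i j; by_cases h : i = j <;> simp [h, Matrix.diagonal_apply, heig]
  rw [this, mul_zero, zero_mul]

noncomputable def dvec : Fin 4 → ℝ := ![3/16, 1/16, 9/16, 3/16]

lemma sigma_eq : σcex = Matrix.diagonal (fun i => ((dvec i : ℝ) : ℂ)) := by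
  unfold σcex
  ext i j
  fin_cases i <;> fin_cases j <;>
    simp [dvec, Matrix.diagonal_apply]

lemma dvec_herm : (Matrix.diagonal (fun i => ((dvec i : ℝ) : ℂ))).IsHermitian :=
  Matrix.isHermitian_diagonal_of_self_adjoint _ (by
    funext i; simp [star, Complex.ext_iff])

lemma rho_herm : ρcex.IsHermitian := by
  unfold ρcex
  ext i j
  fin_cases i <;> fin_cases j <;>
    simp [Matrix.conjTranspose_apply, Matrix.vecHead, Matrix.vecTail, Complex.ext_iff]

lemma rho_proj : ρcex * ρcex = ρcex := by
  have h3 : (Real.sqrt 3 : ℂ) * (Real.sqrt 3 : ℂ) = 3 := by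
    rw [← Complex.ofReal_mul, Real.mul_self_sqrt (by norm_num)]
    norm_num
  unfold ρcex
  ext i j
  fin_cases i <;> fin_cases j <;>
    simp [Matrix.mul_apply, Fin.sum_univ_four, Matrix.vecHead, Matrix.vecTail] <;>
    first
      | linear_combination h3 / 16
      | ring

lemma mlog_rho : mlog ρcex = 0 := by
  simp only [mlog]
  rw [dif_pos rho_herm]
  exact mlog_proj_aux rho_herm rho_proj

lemma mlog_sigma : mlog σcex = Matrix.diagonal (fun i => (Real.log (dvec i) : ℂ)) := by
  rw [sigma_eq]
  simp only [mlog]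
  rw [dif_pos dvec_herm]
  exact conj_diag dvec dvec_herm Real.log

lemma eigProj_sigma (c : ℝ) :
    eigProj σcex c = Matrix.diagonal (fun i => if dvec i = c then (1 : ℂ) else 0) := by
  rw [sigma_eq]
  simp only [eigProj]
  rw [dif_pos dvec_herm]
  have h := conj_diag dvec dvec_herm (fun x => if x = c then 1 else 0)
  simpa [apply_ite (Complex.ofReal)] using h

/-- Counter-example to the converse of the minimality criterion: for this pair one has
`S(ρ‖σ) = S(σ) - S(ρ)`, yet `(ρ, σ)` is not minimal: some spectral eigenprojection `Q`
of `σ` has `Tr(σ Q) ≠ Tr(ρ Q)`. -/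
theorem counterexample_not_minimal :
    ((ρcex * mlog ρcex).trace.re - (ρcex * mlog σcex).trace.re =
        vnEntropy σcex - vnEntropy ρcex) ∧
      ∃ c : ℝ, (σcex * eigProj σcex c).trace ≠ (ρcex * eigProj σcex c).trace := by
  have l316 : Real.log (3/16) = Real.log 3 - Real.log 16 :=
    Real.log_div (by norm_num) (by norm_num)
  have l116 : Real.log (1/16) = - Real.log 16 := by
    rw [Real.log_div (by norm_num) (by norm_num), Real.log_one]; ring
  have l916 : Real.log (9/16) = 2 * Real.log 3 - Real.log 16 := by
    rw [Real.log_div (by norm_num) (by norm_num),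
      show (9:ℝ) = 3^2 by norm_num, Real.log_pow]
    push_cast; ring
  constructor
  · rw [mlog_rho, mlog_sigma]
    unfold vnEntropy
    rw [mlog_rho, mlog_sigma]
    simp only [mul_zero, Matrix.trace_zero, Complex.zero_re, neg_zero, sub_zero, zero_sub]
    rw [sigma_eq]
    simp [Matrix.trace, Matrix.diag, Matrix.mul_diagonal, Fin.sum_univ_four, ρcex, dvec,
      Matrix.vecHead, Matrix.vecTail]
    have hc : (Complex.log 16).re = Real.log 16 := by
      rw [show (16:ℂ) = ((16:ℝ):ℂ) from by norm_num, Complex.log_ofReal_re]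
    rw [hc, l916]
    ring_nf
    rw [l316]
    ring
  · refine ⟨1/16, ?_⟩
    rw [eigProj_sigma, sigma_eq]
    have h1 : dvec 0 = 3/16 := rfl
    have h2 : dvec 1 = 1/16 := rfl
    have h3 : dvec 2 = 9/16 := rfl
    have h4 : dvec 3 = 3/16 := rfl
    simp [Matrix.trace, Matrix.diag, Matrix.mul_diagonal, Fin.sum_univ_four, ρcex,
      Matrix.vecHead, Matrix.vecTail, h1, h2, h3, h4]
    norm_num [Complex.ext_iff]
end

section
/- For a pure product initial state ρ ⊗ P_φ and a Lüders measurement with projections Q_n = U*(1 ⊗ P_n)U on the composite system, the entropy of the post-measurement state ρ' = Σ_n Q_n (ρ ⊗ P_φ) Q_n satisfies S(ρ) ≤ S(ρ'). -/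
open Matrix Kronecker
open scoped ComplexOrder

section Helpers
variable {n : Type*} [Fintype n] [DecidableEq n]

lemma commute_diag_fun {B : Matrix n n ℂ} {d e : n → ℝ} (g : ℝ → ℝ)
    (h : B * Matrix.diagonal (fun i => (d i : ℂ)) = Matrix.diagonal (fun i => (e i : ℂ)) * B) :
    B * Matrix.diagonal (fun i => (g (d i) : ℂ))
      = Matrix.diagonal (fun i => (g (e i) : ℂ)) * B := by
  ext i j
  have h' := congrArg (fun M => M i j) h
  simp only [Matrix.mul_diagonal, Matrix.diagonal_mul] at h' ⊢
  by_cases hB : B i j = 0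
  · simp [hB]
  · have hde : d j = e i := by
      have : (d j : ℂ) = e i := by
        have h2 : B i j * (d j : ℂ) = B i j * (e i : ℂ) := by rw [h', mul_comm]
        exact mul_left_cancel₀ hB h2
      exact_mod_cast this
    rw [hde, mul_comm]

lemma mlog_eq {A V : Matrix n n ℂ} (hA : A.IsHermitian) (hV : V ∈ Matrix.unitaryGroup n ℂ)
    (d : n → ℝ) (hAV : A = V * Matrix.diagonal (fun i => (d i : ℂ)) * Vᴴ) :
    mlog A = V * Matrix.diagonal (fun i => ((Real.log (d i) : ℝ) : ℂ)) * Vᴴ := by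
  set E : Matrix n n ℂ := (hA.eigenvectorUnitary : Matrix n n ℂ) with hE
  have hEE : Eᴴ * E = 1 := by
    rw [← Matrix.star_eq_conjTranspose]
    exact Matrix.mem_unitaryGroup_iff'.mp hA.eigenvectorUnitary.2
  have hEE' : E * Eᴴ = 1 := by
    rw [← Matrix.star_eq_conjTranspose]
    exact Matrix.mem_unitaryGroup_iff.mp hA.eigenvectorUnitary.2
  have hVV : Vᴴ * V = 1 := by
    rw [← Matrix.star_eq_conjTranspose]; exact Matrix.mem_unitaryGroup_iff'.mp hV
  have hVV' : V * Vᴴ = 1 := by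
    rw [← Matrix.star_eq_conjTranspose]; exact Matrix.mem_unitaryGroup_iff.mp hV
  have hspec : A = E * Matrix.diagonal (fun i => ((hA.eigenvalues i : ℝ) : ℂ)) * Eᴴ := by
    have h := hA.spectral_theorem; simp [Function.comp_def, Matrix.star_eq_conjTranspose] at h; exact h
  set B : Matrix n n ℂ := Eᴴ * V with hB
  have hcomm : B * Matrix.diagonal (fun i => (d i : ℂ))
      = Matrix.diagonal (fun i => ((hA.eigenvalues i : ℝ) : ℂ)) * B := by
    have h1 : E * Matrix.diagonal (fun i => ((hA.eigenvalues i : ℝ) : ℂ)) * Eᴴ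
        = V * Matrix.diagonal (fun i => (d i : ℂ)) * Vᴴ := by rw [← hspec, ← hAV]
    calc B * Matrix.diagonal (fun i => (d i : ℂ))
        = Eᴴ * (V * Matrix.diagonal (fun i => (d i : ℂ)) * Vᴴ) * V := by
          rw [hB]; simp only [Matrix.mul_assoc, hVV]; rw [Matrix.mul_one]
      _ = Eᴴ * (E * Matrix.diagonal (fun i => ((hA.eigenvalues i : ℝ) : ℂ)) * Eᴴ) * V := by
          rw [h1]
      _ = Matrix.diagonal (fun i => ((hA.eigenvalues i : ℝ) : ℂ)) * B := by
          rw [hB]; simp only [← Matrix.mul_assoc, hEE]; rw [Matrix.one_mul]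
  have hcomm2 := commute_diag_fun Real.log hcomm
  have : E * (B * Matrix.diagonal (fun i => ((Real.log (d i) : ℝ) : ℂ))) * Vᴴ
      = E * (Matrix.diagonal (fun i => ((Real.log (hA.eigenvalues i) : ℝ) : ℂ)) * B) * Vᴴ := by
    rw [hcomm2]
  rw [hB] at this
  have hL : E * Matrix.diagonal (fun i => ((Real.log (hA.eigenvalues i) : ℝ) : ℂ)) * Eᴴ
      = V * Matrix.diagonal (fun i => ((Real.log (d i) : ℝ) : ℂ)) * Vᴴ := by
    calc E * Matrix.diagonal (fun i => ((Real.log (hA.eigenvalues i) : ℝ) : ℂ)) * Eᴴ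
        = E * (Matrix.diagonal (fun i => ((Real.log (hA.eigenvalues i) : ℝ) : ℂ)) * (Eᴴ * V)) * Vᴴ := by
          simp only [Matrix.mul_assoc, hVV']; rw [Matrix.mul_one]
      _ = E * (Eᴴ * V * Matrix.diagonal (fun i => ((Real.log (d i) : ℝ) : ℂ))) * Vᴴ := by
          rw [← this]
      _ = V * Matrix.diagonal (fun i => ((Real.log (d i) : ℝ) : ℂ)) * Vᴴ := by
          simp only [← Matrix.mul_assoc, hEE']; rw [Matrix.one_mul]
  rw [mlog, dif_pos hA, Matrix.star_eq_conjTranspose, ← hE, ← hL]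

end Helpers

section Helpers2
variable {n : Type*} [Fintype n] [DecidableEq n]

lemma trace_unitary_conj {V M : Matrix n n ℂ} (hVV : Vᴴ * V = 1) :
    (V * M * Vᴴ).trace = M.trace := by
  rw [Matrix.trace_mul_cycle, hVV, Matrix.one_mul]

lemma vnEntropy_eq {A V : Matrix n n ℂ} (hA : A.IsHermitian) (hV : V ∈ Matrix.unitaryGroup n ℂ)
    (d : n → ℝ) (hAV : A = V * Matrix.diagonal (fun i => (d i : ℂ)) * Vᴴ) :
    vnEntropy A = -∑ i, d i * Real.log (d i) := by
  have hVV : Vᴴ * V = 1 := by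
    rw [← Matrix.star_eq_conjTranspose]; exact Matrix.mem_unitaryGroup_iff'.mp hV
  have hml := mlog_eq hA hV d hAV
  have key : A * mlog A
      = V * Matrix.diagonal (fun i => ((d i : ℂ) * (Real.log (d i) : ℂ))) * Vᴴ := by
    rw [hml]
    conv_lhs => rw [hAV]
    calc V * Matrix.diagonal (fun i => (d i : ℂ)) * Vᴴ *
          (V * Matrix.diagonal (fun i => ((Real.log (d i) : ℝ) : ℂ)) * Vᴴ)
        = V * (Matrix.diagonal (fun i => (d i : ℂ)) * (Vᴴ * V) *
            Matrix.diagonal (fun i => ((Real.log (d i) : ℝ) : ℂ))) * Vᴴ := by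
          simp only [Matrix.mul_assoc]
      _ = V * Matrix.diagonal (fun i => ((d i : ℂ) * (Real.log (d i) : ℂ))) * Vᴴ := by
          rw [hVV, Matrix.mul_one, Matrix.diagonal_mul_diagonal]
  rw [vnEntropy, key, trace_unitary_conj hVV, Matrix.trace_diagonal]
  rw [show (∑ i, ((d i : ℂ) * (Real.log (d i) : ℂ))) = ((∑ i, d i * Real.log (d i) : ℝ) : ℂ) by
    push_cast; ring_nf]
  simp

lemma commute_mlog {A Q : Matrix n n ℂ} (hA : A.IsHermitian) (h : Q * A = A * Q) :
    Q * mlog A = mlog A * Q := by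
  set E : Matrix n n ℂ := (hA.eigenvectorUnitary : Matrix n n ℂ) with hE
  have hEE : Eᴴ * E = 1 := by
    rw [← Matrix.star_eq_conjTranspose]
    exact Matrix.mem_unitaryGroup_iff'.mp hA.eigenvectorUnitary.2
  have hEE' : E * Eᴴ = 1 := by
    rw [← Matrix.star_eq_conjTranspose]
    exact Matrix.mem_unitaryGroup_iff.mp hA.eigenvectorUnitary.2
  have hc1 : ∀ X : Matrix n n ℂ, Eᴴ * (E * X) = X := fun X => by
    rw [← Matrix.mul_assoc, hEE, Matrix.one_mul]
  have hc2 : ∀ X : Matrix n n ℂ, E * (Eᴴ * X) = X := fun X => by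
    rw [← Matrix.mul_assoc, hEE', Matrix.one_mul]
  have hspec : A = E * Matrix.diagonal (fun i => ((hA.eigenvalues i : ℝ) : ℂ)) * Eᴴ := by
    have h := hA.spectral_theorem; simp [Function.comp_def, Matrix.star_eq_conjTranspose] at h; exact h
  set D : Matrix n n ℂ := Matrix.diagonal (fun i => ((hA.eigenvalues i : ℝ) : ℂ)) with hD
  set L : Matrix n n ℂ := Matrix.diagonal (fun i => ((Real.log (hA.eigenvalues i) : ℝ) : ℂ)) with hL
  set B : Matrix n n ℂ := Eᴴ * Q * E with hB
  have e1 : B * D = Eᴴ * ((Q * A) * E) := by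
    rw [hspec, hB]
    simp only [Matrix.mul_assoc, hc1, hc2, hEE, hEE', Matrix.mul_one]
  have e2 : D * B = Eᴴ * ((A * Q) * E) := by
    rw [hspec, hB]
    simp only [Matrix.mul_assoc, hc1, hc2, hEE, hEE', Matrix.mul_one]
  have hcomm : B * D = D * B := by rw [e1, h, ← e2]
  have hcomm2 : B * L = L * B := by
    rw [hD] at hcomm
    rw [hL]
    exact commute_diag_fun Real.log hcomm
  have hml : mlog A = E * L * Eᴴ := by
    rw [mlog, dif_pos hA, Matrix.star_eq_conjTranspose, ← hE, hL]
  have e3 : Q * (E * L * Eᴴ) = E * ((B * L) * Eᴴ) := by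
    rw [hB]
    simp only [Matrix.mul_assoc, hc1, hc2, hEE, hEE', Matrix.mul_one]
  have e4 : (E * L * Eᴴ) * Q = E * ((L * B) * Eᴴ) := by
    rw [hB]
    simp only [Matrix.mul_assoc, hc1, hc2, hEE, hEE', Matrix.mul_one]
  rw [hml, e3, e4, hcomm2]

end Helpers2

section Klein
variable {n : Type*} [Fintype n] [DecidableEq n]

lemma pt_ineq (a p q : ℝ) (ha : 0 ≤ a) (hp : 0 ≤ p) (hq : 0 ≤ q) (hk : q = 0 → a * p = 0) :
    a * p * Real.log q ≤ a * p * Real.log p - a * p + a * q := by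
  rcases eq_or_lt_of_le hq with h0 | hqpos
  · have hap := hk h0.symm
    rw [← h0, hap]
    simp
  · rcases eq_or_lt_of_le hp with hp0 | hppos
    · rw [← hp0]
      simp
      positivity
    · have hlog : Real.log q - Real.log p ≤ q / p - 1 := by
        have h := Real.log_le_sub_one_of_pos (div_pos hqpos hppos)
        rwa [Real.log_div (ne_of_gt hqpos) (ne_of_gt hppos)] at h
      have h2 : p * (q / p - 1) = q - p := by field_simp
      have h3 : p * (Real.log q - Real.log p) ≤ q - p := by
        have := mul_le_mul_of_nonneg_left hlog (le_of_lt hppos)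
        rwa [h2] at this
      nlinarith [mul_le_mul_of_nonneg_left h3 ha]

lemma trace_pair {V W : Matrix n n ℂ} (p l : n → ℝ) :
    ((V * Matrix.diagonal (fun i => (p i : ℂ)) * Vᴴ) *
      (W * Matrix.diagonal (fun i => (l i : ℂ)) * Wᴴ)).trace
      = ((∑ j, ∑ i, Complex.normSq ((Wᴴ * V) j i) * p i * l j : ℝ) : ℂ) := by
  set C : Matrix n n ℂ := Wᴴ * V with hC
  have h1 : (V * Matrix.diagonal (fun i => (p i : ℂ)) * Vᴴ) *
      (W * Matrix.diagonal (fun i => (l i : ℂ)) * Wᴴ)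
      = (V * Matrix.diagonal (fun i => (p i : ℂ)) * Vᴴ * W) *
          Matrix.diagonal (fun i => (l i : ℂ)) * Wᴴ := by
    simp only [Matrix.mul_assoc]
  rw [h1, Matrix.trace_mul_cycle]
  have h2 : Wᴴ * (V * Matrix.diagonal (fun i => (p i : ℂ)) * Vᴴ * W)
      = C * Matrix.diagonal (fun i => (p i : ℂ)) * Cᴴ := by
    simp only [hC, Matrix.conjTranspose_mul, Matrix.conjTranspose_conjTranspose,
      Matrix.mul_assoc]
  rw [show Wᴴ * (V * Matrix.diagonal (fun i => (p i : ℂ)) * Vᴴ * W) *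
      Matrix.diagonal (fun i => (l i : ℂ))
    = (C * Matrix.diagonal (fun i => (p i : ℂ)) * Cᴴ) *
      Matrix.diagonal (fun i => (l i : ℂ)) from by rw [h2]]
  have h3 : (C * Matrix.diagonal (fun i => (p i : ℂ)) * Cᴴ *
      Matrix.diagonal (fun i => (l i : ℂ))).trace
      = ∑ j, (∑ i, (C j i * (p i : ℂ)) * star (C j i)) * (l j : ℂ) := by
    simp only [Matrix.trace, Matrix.diag_apply, Matrix.mul_diagonal]
    refine Finset.sum_congr rfl fun j _ => ?_
    rw [Matrix.mul_apply]
    simp only [Matrix.mul_diagonal, Matrix.conjTranspose_apply]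
  rw [h3]
  push_cast
  refine Finset.sum_congr rfl fun j _ => ?_
  rw [Finset.sum_mul]
  refine Finset.sum_congr rfl fun i _ => ?_
  simp only [Complex.star_def]
  rw [show C j i * (p i : ℂ) * (starRingEnd ℂ) (C j i) * (l j : ℂ)
    = C j i * (starRingEnd ℂ) (C j i) * (p i : ℂ) * (l j : ℂ) by ring, Complex.mul_conj]

/-- Klein's inequality with the `log 0 = 0` convention, under a support condition. -/
lemma klein {A B : Matrix n n ℂ} (hA : A.PosSemidef) (hB : B.PosSemidef)
    (hker : ∀ x, B *ᵥ x = 0 → A *ᵥ x = 0) :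
    (A * mlog B).trace.re ≤ (A * mlog A).trace.re - A.trace.re + B.trace.re := by
  classical
  set V : Matrix n n ℂ := (hA.1.eigenvectorUnitary : Matrix n n ℂ) with hV
  set W : Matrix n n ℂ := (hB.1.eigenvectorUnitary : Matrix n n ℂ) with hW
  set p : n → ℝ := hA.1.eigenvalues with hp
  set q : n → ℝ := hB.1.eigenvalues with hq
  have hVV : Vᴴ * V = 1 := by
    rw [← Matrix.star_eq_conjTranspose]
    exact Matrix.mem_unitaryGroup_iff'.mp hA.1.eigenvectorUnitary.2
  have hVV' : V * Vᴴ = 1 := by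
    rw [← Matrix.star_eq_conjTranspose]
    exact Matrix.mem_unitaryGroup_iff.mp hA.1.eigenvectorUnitary.2
  have hWW : Wᴴ * W = 1 := by
    rw [← Matrix.star_eq_conjTranspose]
    exact Matrix.mem_unitaryGroup_iff'.mp hB.1.eigenvectorUnitary.2
  have hWW' : W * Wᴴ = 1 := by
    rw [← Matrix.star_eq_conjTranspose]
    exact Matrix.mem_unitaryGroup_iff.mp hB.1.eigenvectorUnitary.2
  have hspecA : A = V * Matrix.diagonal (fun i => ((p i : ℝ) : ℂ)) * Vᴴ := by
    have h := hA.1.spectral_theorem; simp [Function.comp_def, Matrix.star_eq_conjTranspose] at h; exact h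
  have hspecB : B = W * Matrix.diagonal (fun i => ((q i : ℝ) : ℂ)) * Wᴴ := by
    have h := hB.1.spectral_theorem; simp [Function.comp_def, Matrix.star_eq_conjTranspose] at h; exact h
  have hVmem : V ∈ Matrix.unitaryGroup n ℂ := hA.1.eigenvectorUnitary.2
  have hWmem : W ∈ Matrix.unitaryGroup n ℂ := hB.1.eigenvectorUnitary.2
  have hmlA := mlog_eq hA.1 hVmem p hspecA
  have hmlB := mlog_eq hB.1 hWmem q hspecB
  set C : Matrix n n ℂ := Wᴴ * V with hC
  set a : n → n → ℝ := fun j i => Complex.normSq (C j i) with ha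
  have hpnn : ∀ i, 0 ≤ p i := hA.eigenvalues_nonneg
  have hqnn : ∀ j, 0 ≤ q j := hB.eigenvalues_nonneg
  have hann : ∀ j i, 0 ≤ a j i := fun j i => Complex.normSq_nonneg _
  -- column sums of a are 1
  have hcol : ∀ i, ∑ j, a j i = 1 := by
    intro i
    have h1 : (Cᴴ * C) i i = 1 := by
      have hCC : Cᴴ * C = 1 := by
        rw [hC, Matrix.conjTranspose_mul, Matrix.conjTranspose_conjTranspose]
        calc Vᴴ * W * (Wᴴ * V) = Vᴴ * ((W * Wᴴ) * V) := by simp only [Matrix.mul_assoc]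
          _ = 1 := by rw [hWW', Matrix.one_mul, hVV]
      rw [hCC, Matrix.one_apply_eq]
    have h2 : (Cᴴ * C) i i = ((∑ j, a j i : ℝ) : ℂ) := by
      simp only [Matrix.mul_apply, Matrix.conjTranspose_apply, ha]
      push_cast
      refine Finset.sum_congr rfl fun j _ => ?_
      simp only [Complex.star_def]
      rw [mul_comm, Complex.mul_conj]
    rw [h2] at h1
    exact_mod_cast h1
  -- row sums of a are 1
  have hrow : ∀ j, ∑ i, a j i = 1 := by
    intro j
    have h1 : (C * Cᴴ) j j = 1 := by
      have hCC : C * Cᴴ = 1 := by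
        rw [hC, Matrix.conjTranspose_mul, Matrix.conjTranspose_conjTranspose]
        calc Wᴴ * V * (Vᴴ * W) = Wᴴ * ((V * Vᴴ) * W) := by simp only [Matrix.mul_assoc]
          _ = 1 := by rw [hVV', Matrix.one_mul, hWW]
      rw [hCC, Matrix.one_apply_eq]
    have h2 : (C * Cᴴ) j j = ((∑ i, a j i : ℝ) : ℂ) := by
      simp only [Matrix.mul_apply, Matrix.conjTranspose_apply, ha]
      push_cast
      refine Finset.sum_congr rfl fun i _ => ?_
      simp only [Complex.star_def]
      rw [Complex.mul_conj]
    rw [h2] at h1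
    exact_mod_cast h1
  -- kernel condition entrywise
  have hkern : ∀ j, q j = 0 → ∀ i, a j i * p i = 0 := by
    intro j hqj i
    set x : n → ℂ := W *ᵥ Pi.single j 1 with hx
    have hBW : B * W = W * Matrix.diagonal (fun i => ((q i : ℝ) : ℂ)) := by
      rw [hspecB, Matrix.mul_assoc, hWW, Matrix.mul_one]
    have hBx : B *ᵥ x = 0 := by
      rw [hx, Matrix.mulVec_mulVec, hBW, ← Matrix.mulVec_mulVec,
        Matrix.diagonal_mulVec_single]
      rw [hqj]
      simp
    have hAx : A *ᵥ x = 0 := hker x hBx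
    have hkey : (p i : ℂ) * star (C j i) = 0 := by
      have hAx' : V *ᵥ (Matrix.diagonal (fun i => ((p i : ℝ) : ℂ)) *ᵥ (Vᴴ *ᵥ x)) = 0 := by
        rw [Matrix.mulVec_mulVec, Matrix.mulVec_mulVec, ← hspecA]
        exact hAx
      have hz : Matrix.diagonal (fun i => ((p i : ℝ) : ℂ)) *ᵥ (Vᴴ *ᵥ x) = 0 := by
        have h2 := congrArg (fun v => Vᴴ *ᵥ v) hAx'
        simpa only [Matrix.mulVec_mulVec, ← Matrix.mul_assoc, hVV, Matrix.one_mul,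
          Matrix.mulVec_zero] using h2
      have hi := congrFun hz i
      rw [Matrix.mulVec_diagonal] at hi
      have hyi : (Vᴴ *ᵥ x) i = star (C j i) := by
        rw [hx, Matrix.mulVec_mulVec,
          show Vᴴ * W = Cᴴ by
            rw [hC, Matrix.conjTranspose_mul, Matrix.conjTranspose_conjTranspose],
          Matrix.mulVec_single]
        simp [Matrix.conjTranspose_apply]
      rw [hyi] at hi
      exact hi
    rcases mul_eq_zero.mp hkey with h | h
    · have : p i = 0 := by exact_mod_cast h
      rw [this, mul_zero]
    · have : C j i = 0 := by simpa using h
      simp [ha, this]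
  -- trace identities
  have T_AB : (A * mlog B).trace.re = ∑ j, ∑ i, a j i * p i * Real.log (q j) := by
    rw [hmlB]
    conv_lhs => rw [hspecA]
    rw [trace_pair p (fun j => Real.log (q j))]
    rw [Complex.ofReal_re]
  have T_AA : (A * mlog A).trace.re = ∑ i, p i * Real.log (p i) := by
    rw [hmlA]
    conv_lhs => rw [hspecA]
    rw [trace_pair p (fun j => Real.log (p j)), Complex.ofReal_re, hVV]
    rw [Finset.sum_comm]
    refine Finset.sum_congr rfl fun i _ => ?_
    rw [Finset.sum_eq_single i]
    · rw [Matrix.one_apply_eq]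
      simp
    · intro j _ hji
      rw [Matrix.one_apply_ne hji]
      simp
    · intro h; exact absurd (Finset.mem_univ i) h
  have T_A : A.trace.re = ∑ i, p i := by
    conv_lhs => rw [hspecA]
    rw [trace_unitary_conj hVV, Matrix.trace_diagonal]
    rw [show (∑ i, ((p i : ℝ) : ℂ)) = ((∑ i, p i : ℝ) : ℂ) by push_cast; ring]
    rw [Complex.ofReal_re]
  have T_B : B.trace.re = ∑ j, q j := by
    conv_lhs => rw [hspecB]
    rw [trace_unitary_conj hWW, Matrix.trace_diagonal]
    rw [show (∑ i, ((q i : ℝ) : ℂ)) = ((∑ i, q i : ℝ) : ℂ) by push_cast; ring]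
    rw [Complex.ofReal_re]
  rw [T_AB, T_AA, T_A, T_B]
  have step : ∑ j, ∑ i, a j i * p i * Real.log (q j)
      ≤ ∑ j, ∑ i, (a j i * p i * Real.log (p i) - a j i * p i + a j i * q j) := by
    refine Finset.sum_le_sum fun j _ => Finset.sum_le_sum fun i _ => ?_
    exact pt_ineq (a j i) (p i) (q j) (hann j i) (hpnn i) (hqnn j)
      (fun hq0 => hkern j hq0 i)
  refine le_trans step (le_of_eq ?_)
  have e1 : ∑ j, ∑ i, a j i * p i * Real.log (p i) = ∑ i, p i * Real.log (p i) := by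
    rw [Finset.sum_comm]
    refine Finset.sum_congr rfl fun i _ => ?_
    calc ∑ j, a j i * p i * Real.log (p i)
        = ∑ j, a j i * (p i * Real.log (p i)) := by
          refine Finset.sum_congr rfl fun j _ => by ring
      _ = (∑ j, a j i) * (p i * Real.log (p i)) := by rw [Finset.sum_mul]
      _ = p i * Real.log (p i) := by rw [hcol i, one_mul]
  have e2 : ∑ j, ∑ i, a j i * p i = ∑ i, p i := by
    rw [Finset.sum_comm]
    refine Finset.sum_congr rfl fun i _ => ?_
    rw [← Finset.sum_mul, hcol i, one_mul]
  have e3 : ∑ j, ∑ i, a j i * q j = ∑ j, q j := by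
    refine Finset.sum_congr rfl fun j _ => ?_
    rw [← Finset.sum_mul, hrow j, one_mul]
  calc ∑ j, ∑ i, (a j i * p i * Real.log (p i) - a j i * p i + a j i * q j)
      = (∑ j, ∑ i, a j i * p i * Real.log (p i)) - (∑ j, ∑ i, a j i * p i)
          + (∑ j, ∑ i, a j i * q j) := by
        simp only [Finset.sum_add_distrib, Finset.sum_sub_distrib]
  _ = (∑ i, p i * Real.log (p i)) - (∑ i, p i) + (∑ j, q j) := by rw [e1, e2, e3]

end Klein

section Kron
variable {m k : ℕ}

lemma kron_conjT (A : Matrix (Fin m) (Fin m) ℂ) (B : Matrix (Fin k) (Fin k) ℂ) :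
    (A ⊗ₖ B)ᴴ = Aᴴ ⊗ₖ Bᴴ := by
  ext ⟨i, j⟩ ⟨i', j'⟩
  simp [Matrix.conjTranspose_apply, Matrix.kroneckerMap_apply, star_mul', mul_comm]

lemma kron_sum_right {N : Type*} [Fintype N] (A : Matrix (Fin m) (Fin m) ℂ)
    (f : N → Matrix (Fin k) (Fin k) ℂ) :
    A ⊗ₖ (∑ n, f n) = ∑ n, A ⊗ₖ f n := by
  ext ⟨i, j⟩ ⟨i', j'⟩
  simp only [Matrix.kroneckerMap_apply, Matrix.sum_apply, Finset.mul_sum]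

lemma matrix_sum_mulVec {n : Type*} [Fintype n] {N : Type*} [Fintype N]
    (f : N → Matrix n n ℂ) (v : n → ℂ) :
    (∑ i, f i) *ᵥ v = ∑ i, f i *ᵥ v := by
  ext j
  simp only [Matrix.mulVec, dotProduct, Finset.sum_apply, Matrix.sum_apply,
    Finset.sum_mul]
  rw [Finset.sum_comm]

lemma matrix_mulVec_sum {n : Type*} [Fintype n] {N : Type*} [Fintype N]
    (A : Matrix n n ℂ) (v : N → n → ℂ) :
    A *ᵥ (∑ i, v i) = ∑ i, A *ᵥ v i := by
  ext j
  simp only [Matrix.mulVec, dotProduct, Finset.sum_apply, Finset.mul_sum]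
  rw [Finset.sum_comm]

lemma dot_sum_right {n : Type*} [Fintype n] {N : Type*} [Fintype N]
    (v : n → ℂ) (w : N → n → ℂ) :
    v ⬝ᵥ (∑ i, w i) = ∑ i, v ⬝ᵥ w i := by
  simp only [dotProduct, Finset.sum_apply, Finset.mul_sum]
  rw [Finset.sum_comm]

lemma real_mul_self_eq (x : ℝ) (h : x * x = x) : x = 0 ∨ x = 1 := by
  have h2 : x * (x - 1) = 0 := by ring_nf; linarith
  rcases mul_eq_zero.mp h2 with h3 | h3
  · exact Or.inl h3
  · exact Or.inr (by linarith)

end Kron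

/-- For a pure product initial state `ρ ⊗ P_φ` and a Lüders measurement with
projections `Q_n = U* (1 ⊗ P_n) U` on the composite system, the entropy of the
post-measurement state `ρ' = Σ_n Q_n (ρ ⊗ P_φ) Q_n` satisfies `S(ρ) ≤ S(ρ')`. -/
theorem dilation_entropy_increase {m k : ℕ} {N : Type*} [Fintype N]
    (ρ : Matrix (Fin m) (Fin m) ℂ) (hρ : ρ.PosSemidef) (hρ1 : ρ.trace = 1)
    (φ : Fin k → ℂ) (hφ : ∑ i, ‖φ i‖ ^ 2 = 1)
    (U : Matrix (Fin m × Fin k) (Fin m × Fin k) ℂ)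
    (hU : U ∈ Matrix.unitaryGroup (Fin m × Fin k) ℂ)
    (P : N → Matrix (Fin k) (Fin k) ℂ)
    (hPh : ∀ n, (P n).IsHermitian) (hPp : ∀ n, P n * P n = P n)
    (hPo : ∀ n n', n ≠ n' → P n * P n' = 0) (hPsum : ∑ n, P n = 1) :
    vnEntropy ρ ≤
      vnEntropy (∑ n, (Uᴴ * ((1 : Matrix (Fin m) (Fin m) ℂ) ⊗ₖ P n) * U) *
        (ρ ⊗ₖ Matrix.vecMulVec φ (star φ)) *
        (Uᴴ * ((1 : Matrix (Fin m) (Fin m) ℂ) ⊗ₖ P n) * U)) := by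
  classical
  set Pφ : Matrix (Fin k) (Fin k) ℂ := Matrix.vecMulVec φ (star φ) with hPφdef
  set τ : Matrix (Fin m × Fin k) (Fin m × Fin k) ℂ := ρ ⊗ₖ Pφ with hτdef
  set Q : N → Matrix (Fin m × Fin k) (Fin m × Fin k) ℂ :=
    fun n => Uᴴ * ((1 : Matrix (Fin m) (Fin m) ℂ) ⊗ₖ P n) * U with hQdef
  show vnEntropy ρ ≤ vnEntropy (∑ n, Q n * τ * Q n)
  set τ' : Matrix (Fin m × Fin k) (Fin m × Fin k) ℂ := ∑ n, Q n * τ * Q n with hτ'def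
  -- basic scalar fact
  have hstar : ∀ z : ℂ, star z * z = ((‖z‖ ^ 2 : ℝ) : ℂ) := by
    intro z
    rw [mul_comm, show star z = (starRingEnd ℂ) z from rfl, Complex.mul_conj,
      Complex.normSq_eq_norm_sq]
  have hφ1 : (∑ i, star (φ i) * φ i) = (1 : ℂ) := by
    have h := congrArg (fun r : ℝ => (r : ℂ)) hφ
    push_cast at h
    rw [← h]
    exact Finset.sum_congr rfl fun i _ => by rw [hstar]; push_cast; ring
  -- projection facts
  have hPφh : Pφ.IsHermitian := by
    show Pφᴴ = Pφ
    ext i j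
    simp only [hPφdef, Matrix.conjTranspose_apply, Matrix.vecMulVec_apply, Pi.star_apply,
      star_mul', star_star]
    ring
  have hPφp : Pφ * Pφ = Pφ := by
    ext i j
    rw [Matrix.mul_apply]
    simp only [hPφdef, Matrix.vecMulVec_apply, Pi.star_apply]
    calc ∑ l, φ i * star (φ l) * (φ l * star (φ j))
        = (∑ l, star (φ l) * φ l) * (φ i * star (φ j)) := by
          rw [Finset.sum_mul]
          exact Finset.sum_congr rfl fun l _ => by ring
      _ = φ i * star (φ j) := by rw [hφ1, one_mul]
  have hPφtr : Pφ.trace = 1 := by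
    rw [Matrix.trace]
    simp only [hPφdef, Matrix.diag_apply, Matrix.vecMulVec_apply, Pi.star_apply]
    rw [← hφ1]
    exact Finset.sum_congr rfl fun i _ => mul_comm _ _
  -- unitary facts
  have hUU : Uᴴ * U = 1 := by
    rw [← Matrix.star_eq_conjTranspose]; exact Matrix.mem_unitaryGroup_iff'.mp hU
  have hUU' : U * Uᴴ = 1 := by
    rw [← Matrix.star_eq_conjTranspose]; exact Matrix.mem_unitaryGroup_iff.mp hU
  -- τ is a density matrix
  have hτpsd : τ.PosSemidef := by
    have hPφpsd : Pφ.PosSemidef := by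
      have h := Matrix.posSemidef_conjTranspose_mul_self Pφ
      rwa [hPφh.eq, hPφp] at h
    exact hρ.kronecker hPφpsd
  have hτh : τ.IsHermitian := hτpsd.1
  have hτtr : τ.trace = 1 := by
    rw [hτdef, Matrix.trace_kronecker, hρ1, hPφtr, one_mul]
  -- Q facts
  have hQh : ∀ n, (Q n)ᴴ = Q n := by
    intro n
    rw [hQdef]
    simp only
    rw [Matrix.conjTranspose_mul, Matrix.conjTranspose_mul, Matrix.conjTranspose_conjTranspose,
      kron_conjT, Matrix.conjTranspose_one, hPh n]
    simp only [Matrix.mul_assoc]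
  have hQmul : ∀ n n', Q n * Q n'
      = Uᴴ * ((1 : Matrix (Fin m) (Fin m) ℂ) ⊗ₖ (P n * P n')) * U := by
    intro n n'
    rw [hQdef]
    simp only
    have hc : ∀ Z : Matrix (Fin m × Fin k) (Fin m × Fin k) ℂ, U * (Uᴴ * Z) = Z := fun Z => by
      rw [← Matrix.mul_assoc, hUU', Matrix.one_mul]
    have hXY : ((1 : Matrix (Fin m) (Fin m) ℂ) ⊗ₖ P n) *
        ((1 : Matrix (Fin m) (Fin m) ℂ) ⊗ₖ P n')
        = (1 : Matrix (Fin m) (Fin m) ℂ) ⊗ₖ (P n * P n') := by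
      rw [← Matrix.mul_kronecker_mul, Matrix.one_mul]
    rw [← hXY]
    simp only [Matrix.mul_assoc, hc]
  have hQQ : ∀ n, Q n * Q n = Q n := by
    intro n
    rw [hQmul, hPp n, hQdef]
  have hQorth : ∀ n n', n ≠ n' → Q n * Q n' = 0 := by
    intro n n' hnn
    rw [hQmul, hPo n n' hnn, Matrix.kronecker_zero, Matrix.mul_zero, Matrix.zero_mul]
  have hQsum : ∑ n, Q n = 1 := by
    rw [hQdef]
    simp only
    rw [← Finset.sum_mul, ← Finset.mul_sum, ← kron_sum_right, hPsum,
      Matrix.one_kronecker_one, Matrix.mul_one, hUU]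
  -- τ' facts
  have hτ'psd : τ'.PosSemidef := by
    rw [hτ'def]
    refine Finset.sum_induction _ _ (fun a b ha hb => ha.add hb) Matrix.PosSemidef.zero ?_
    intro n _
    have h := hτpsd.conjTranspose_mul_mul_same (Q n)
    rwa [hQh n] at h
  have hτ'h : τ'.IsHermitian := hτ'psd.1
  have hτ'tr : τ'.trace = 1 := by
    calc τ'.trace = ∑ n, (Q n * τ * Q n).trace := by rw [hτ'def, Matrix.trace_sum]
      _ = ∑ n, (Q n * τ).trace := by
          refine Finset.sum_congr rfl fun n _ => ?_
          rw [Matrix.trace_mul_cycle, hQQ n]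
      _ = ((∑ n, Q n) * τ).trace := by rw [Finset.sum_mul, Matrix.trace_sum]
      _ = 1 := by rw [hQsum, Matrix.one_mul, hτtr]
  have hcommQ : ∀ n₀, Q n₀ * τ' = τ' * Q n₀ := by
    intro n₀
    have hL : Q n₀ * τ' = Q n₀ * τ * Q n₀ := by
      rw [hτ'def, Finset.mul_sum]
      rw [Finset.sum_eq_single n₀]
      · simp only [← Matrix.mul_assoc, hQQ n₀]
      · intro n _ hn
        simp only [← Matrix.mul_assoc, hQorth n₀ n (Ne.symm hn), Matrix.zero_mul]
      · intro h; exact absurd (Finset.mem_univ n₀) h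
    have hR : τ' * Q n₀ = Q n₀ * τ * Q n₀ := by
      rw [hτ'def, Finset.sum_mul]
      rw [Finset.sum_eq_single n₀]
      · simp only [Matrix.mul_assoc, hQQ n₀]
      · intro n _ hn
        simp only [Matrix.mul_assoc, hQorth n n₀ hn, Matrix.mul_zero]
      · intro h; exact absurd (Finset.mem_univ n₀) h
    rw [hL, hR]
  -- kernel condition
  have hker : ∀ x, τ' *ᵥ x = 0 → τ *ᵥ x = 0 := by
    intro x hx0
    have h2 : star x ⬝ᵥ (τ' *ᵥ x) = ∑ n, star (Q n *ᵥ x) ⬝ᵥ (τ *ᵥ (Q n *ᵥ x)) := by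
      rw [hτ'def, matrix_sum_mulVec, dot_sum_right]
      refine Finset.sum_congr rfl fun n _ => ?_
      rw [← Matrix.mulVec_mulVec, ← Matrix.mulVec_mulVec, Matrix.dotProduct_mulVec,
        show star x ᵥ* Q n = star (Q n *ᵥ x) from by
          rw [Matrix.star_mulVec, hQh n]]
    have h1 : (∑ n, star (Q n *ᵥ x) ⬝ᵥ (τ *ᵥ (Q n *ᵥ x))) = 0 := by
      rw [← h2, hx0, dotProduct_zero]
    have h4 : ∀ n, τ *ᵥ (Q n *ᵥ x) = 0 := by
      intro n
      have := (Finset.sum_eq_zero_iff_of_nonneg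
        (fun n _ => hτpsd.dotProduct_mulVec_nonneg (Q n *ᵥ x))).mp h1 n (Finset.mem_univ n)
      exact (hτpsd.dotProduct_mulVec_zero_iff _).mp this
    calc τ *ᵥ x = τ *ᵥ ((∑ n, Q n) *ᵥ x) := by rw [hQsum, Matrix.one_mulVec]
      _ = ∑ n, τ *ᵥ (Q n *ᵥ x) := by rw [matrix_sum_mulVec, matrix_mulVec_sum]
      _ = 0 := by simp only [h4]; simp
  -- spectral data for ρ and Pφ
  have hρh := hρ.1
  set V : Matrix (Fin m) (Fin m) ℂ := (hρh.eigenvectorUnitary : Matrix (Fin m) (Fin m) ℂ)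
    with hVdef
  have hVmem : V ∈ Matrix.unitaryGroup (Fin m) ℂ := hρh.eigenvectorUnitary.2
  set p : Fin m → ℝ := hρh.eigenvalues with hpdef
  have hspecρ : ρ = V * Matrix.diagonal (fun i => ((p i : ℝ) : ℂ)) * Vᴴ := by
    have h := hρh.spectral_theorem; simp [Function.comp_def, Matrix.star_eq_conjTranspose] at h; exact h
  set W : Matrix (Fin k) (Fin k) ℂ := (hPφh.eigenvectorUnitary : Matrix (Fin k) (Fin k) ℂ)
    with hWdef
  have hWmem : W ∈ Matrix.unitaryGroup (Fin k) ℂ := hPφh.eigenvectorUnitary.2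
  set μ : Fin k → ℝ := hPφh.eigenvalues with hμdef
  have hspecφ : Pφ = W * Matrix.diagonal (fun j => ((μ j : ℝ) : ℂ)) * Wᴴ := by
    have h := hPφh.spectral_theorem; simp [Function.comp_def, Matrix.star_eq_conjTranspose] at h; exact h
  have hVV : Vᴴ * V = 1 := by
    rw [← Matrix.star_eq_conjTranspose]; exact Matrix.mem_unitaryGroup_iff'.mp hVmem
  have hVV' : V * Vᴴ = 1 := by
    rw [← Matrix.star_eq_conjTranspose]; exact Matrix.mem_unitaryGroup_iff.mp hVmem
  have hWW : Wᴴ * W = 1 := by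
    rw [← Matrix.star_eq_conjTranspose]; exact Matrix.mem_unitaryGroup_iff'.mp hWmem
  have hWW' : W * Wᴴ = 1 := by
    rw [← Matrix.star_eq_conjTranspose]; exact Matrix.mem_unitaryGroup_iff.mp hWmem
  have hμ01 : ∀ j, μ j = 0 ∨ μ j = 1 := by
    have hdiag : Wᴴ * Pφ * W = Matrix.diagonal (fun j => ((μ j : ℝ) : ℂ)) := by
      have h := hPφh.conjStarAlgAut_star_eigenvectorUnitary
      simp [Function.comp_def, Matrix.star_eq_conjTranspose] at h; exact h
    have hc : ∀ Z : Matrix (Fin k) (Fin k) ℂ, W * (Wᴴ * Z) = Z := fun Z => by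
      rw [← Matrix.mul_assoc, hWW', Matrix.one_mul]
    have hDD : Matrix.diagonal (fun j => ((μ j : ℝ) : ℂ)) *
        Matrix.diagonal (fun j => ((μ j : ℝ) : ℂ))
        = Matrix.diagonal (fun j => ((μ j : ℝ) : ℂ)) := by
      rw [← hdiag]
      calc (Wᴴ * Pφ * W) * (Wᴴ * Pφ * W) = Wᴴ * (Pφ * Pφ) * W := by
            simp only [Matrix.mul_assoc, hc]
        _ = Wᴴ * Pφ * W := by rw [hPφp, Matrix.mul_assoc]
    rw [Matrix.diagonal_mul_diagonal] at hDD
    intro j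
    have hz := Matrix.diagonal_eq_diagonal_iff.mp hDD j
    have hr : μ j * μ j = μ j := by exact_mod_cast hz
    exact real_mul_self_eq _ hr
  have hμsum : ∑ j, μ j = 1 := by
    have h1 : Pφ.trace = ∑ j, ((μ j : ℝ) : ℂ) := by
      conv_lhs => rw [hspecφ]
      rw [trace_unitary_conj hWW, Matrix.trace_diagonal]
    rw [hPφtr] at h1
    have h2 : ((∑ j, μ j : ℝ) : ℂ) = 1 := by push_cast; rw [← h1]
    exact_mod_cast h2
  -- spectral decomposition of τ and entropy computation
  have hKmem : (V ⊗ₖ W) ∈ Matrix.unitaryGroup (Fin m × Fin k) ℂ := by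
    rw [Matrix.mem_unitaryGroup_iff, Matrix.star_eq_conjTranspose, kron_conjT,
      ← Matrix.mul_kronecker_mul, hVV', hWW', Matrix.one_kronecker_one]
  have hspecτ : τ = (V ⊗ₖ W) *
      Matrix.diagonal (fun ij : Fin m × Fin k => ((p ij.1 * μ ij.2 : ℝ) : ℂ)) *
      (V ⊗ₖ W)ᴴ := by
    calc τ = (V * Matrix.diagonal (fun i => ((p i : ℝ) : ℂ)) * Vᴴ) ⊗ₖ
          (W * Matrix.diagonal (fun j => ((μ j : ℝ) : ℂ)) * Wᴴ) := by
          rw [hτdef, ← hspecρ, ← hspecφ]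
      _ = (V ⊗ₖ W) * ((Matrix.diagonal (fun i => ((p i : ℝ) : ℂ))) ⊗ₖ
            (Matrix.diagonal (fun j => ((μ j : ℝ) : ℂ)))) * (Vᴴ ⊗ₖ Wᴴ) := by
          rw [Matrix.mul_kronecker_mul, Matrix.mul_kronecker_mul]
      _ = (V ⊗ₖ W) *
            Matrix.diagonal (fun ij : Fin m × Fin k => ((p ij.1 * μ ij.2 : ℝ) : ℂ)) *
            (V ⊗ₖ W)ᴴ := by
          rw [Matrix.diagonal_kronecker_diagonal, kron_conjT]
          congr 2
          funext ij
          push_cast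
          ring
  have hEρ : vnEntropy ρ = -∑ i, p i * Real.log (p i) := vnEntropy_eq hρh hVmem p hspecρ
  have hEτ : vnEntropy τ
      = -∑ ij : Fin m × Fin k, (p ij.1 * μ ij.2) * Real.log (p ij.1 * μ ij.2) :=
    vnEntropy_eq hτh hKmem (fun ij => p ij.1 * μ ij.2) hspecτ
  have hsum : ∑ ij : Fin m × Fin k, (p ij.1 * μ ij.2) * Real.log (p ij.1 * μ ij.2)
      = ∑ i, p i * Real.log (p i) := by
    rw [Fintype.sum_prod_type]
    refine Finset.sum_congr rfl fun i _ => ?_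
    calc ∑ j, (p i * μ j) * Real.log (p i * μ j)
        = ∑ j, μ j * (p i * Real.log (p i)) := by
          refine Finset.sum_congr rfl fun j _ => ?_
          rcases hμ01 j with h | h <;> rw [h] <;> simp
      _ = p i * Real.log (p i) := by rw [← Finset.sum_mul, hμsum, one_mul]
  -- Lüders step
  have hLc : ∀ n, Q n * mlog τ' = mlog τ' * Q n := fun n => commute_mlog hτ'h (hcommQ n)
  have htr_eq : (τ' * mlog τ').trace = (τ * mlog τ').trace := by
    calc (τ' * mlog τ').trace = ∑ n, ((Q n * τ * Q n) * mlog τ').trace := by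
          rw [hτ'def, Finset.sum_mul, Matrix.trace_sum]
      _ = ∑ n, (mlog τ' * (Q n * τ)).trace := by
          refine Finset.sum_congr rfl fun n _ => ?_
          calc ((Q n * τ * Q n) * mlog τ').trace
              = ((Q n * τ) * (Q n * mlog τ')).trace := by simp only [Matrix.mul_assoc]
            _ = ((Q n * mlog τ') * (Q n * τ)).trace := Matrix.trace_mul_comm _ _
            _ = ((mlog τ' * Q n) * (Q n * τ)).trace := by rw [hLc n]
            _ = (mlog τ' * ((Q n * Q n) * τ)).trace := by simp only [Matrix.mul_assoc]
            _ = (mlog τ' * (Q n * τ)).trace := by rw [hQQ n]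
      _ = (mlog τ' * ((∑ n, Q n) * τ)).trace := by
          rw [Finset.sum_mul, Finset.mul_sum, Matrix.trace_sum]
      _ = (τ * mlog τ').trace := by rw [hQsum, Matrix.one_mul, Matrix.trace_mul_comm]
  have hklein := klein hτpsd hτ'psd hker
  have h1 : τ.trace.re = 1 := by rw [hτtr]; simp
  have h2 : τ'.trace.re = 1 := by rw [hτ'tr]; simp
  have hE1 : vnEntropy τ' = -(τ * mlog τ').trace.re := by rw [vnEntropy, htr_eq]
  have hE2 : vnEntropy τ = -(τ * mlog τ).trace.re := rfl
  rw [hEρ, ← hsum, ← hEτ, hE2, hE1]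
  rw [h1, h2] at hklein
  linarith
end
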